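/- arXiv:1212.6466 — 5 statements merged into one kernel-verified Lean document; each statement's English description precedes it below -/
import Mathlib

section
/- Let G be a 2-connected graph on n ≥ 3 vertices. If for every pair of vertices u, v with distance exactly 2 in G, max{deg(u), deg(v)} ≥ n/2, then G is Hamiltonian. -/
open SimpleGraph

/-- `G` is 2-connected: at least 3 vertices and deleting any single vertex leaves
a connected graph. -/
def TwoConnected {V : Type*} [Fintype V] (G : SimpleGraph V) : Prop :=
  3 ≤ Fintype.card V ∧ ∀ v : V, (G.induce {w | w ≠ v}).Connected

namespace FanProofAux

open List

set_option linter.unusedSectionVars false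
set_option maxHeartbeats 1000000

variable {V : Type*} [Fintype V] [DecidableEq V] {G : SimpleGraph V}

lemma walk_stays {W : Set V} {c : V}
    (hclosed : ∀ u ∈ W, ∀ v, G.Adj u v → v ∈ W ∨ v = c) :
    ∀ {a b : {w : V | w ≠ c}} (_ : (G.induce {w : V | w ≠ c}).Walk a b), (a : V) ∈ W → (b : V) ∈ W := by
  intro a b p
  induction p with
  | nil => exact id
  | @cons u v w h q ih =>
    intro ha
    apply ih
    have hadj : G.Adj (u : V) (v : V) := h
    rcases hclosed _ ha _ hadj with h' | h'
    · exact h'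
    · exact absurd h' v.2


lemma not_conn_induce {W : Set V} {c : V} (hc : c ∉ W) {w₀ : V} (hw : w₀ ∈ W)
    {z : V} (hz : z ∉ W) (hzc : z ≠ c)
    (hclosed : ∀ u ∈ W, ∀ v, G.Adj u v → v ∈ W ∨ v = c) :
    ¬ (G.induce {w : V | w ≠ c}).Connected := by
  intro hcon
  have hwc : w₀ ≠ c := fun h => hc (h ▸ hw)
  obtain ⟨p⟩ := hcon.preconnected ⟨w₀, hwc⟩ ⟨z, hzc⟩
  exact hz (walk_stays hclosed p hw)


lemma connected_of_two (h3 : 3 ≤ Fintype.card V)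
    (h2 : ∀ v : V, (G.induce {w : V | w ≠ v}).Connected) : G.Connected := by
  have hne : Nonempty V := by rw [← Fintype.card_pos_iff]; omega
  constructor
  · intro u v
    by_cases huv : u = v
    · exact huv ▸ Reachable.refl u
    · have hex : ∃ w : V, w ∉ ({u, v} : Finset V) := by
        by_contra h
        push_neg at h
        have : (Finset.univ : Finset V) ⊆ {u, v} := fun w _ => h w
        have := Finset.card_le_card this
        simp only [Finset.card_univ] at this
        have h2' : ({u, v} : Finset V).card ≤ 2 :=
          (Finset.card_insert_le _ _).trans (by simp)
        omega
      obtain ⟨w, hw⟩ := hex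
      simp only [Finset.mem_insert, Finset.mem_singleton, not_or] at hw
      obtain ⟨r⟩ := (h2 w).preconnected ⟨u, (fun h : u = w => hw.1 h.symm)⟩
        ⟨v, (fun h : v = w => hw.2 h.symm)⟩
      exact ⟨((r.map ⟨Subtype.val, fun h => h⟩).copy rfl rfl)⟩

lemma exists_adj (hc : G.Connected) (h1 : 1 < Fintype.card V) : ∃ a b : V, G.Adj a b := by
  obtain ⟨a, b, hab⟩ := Fintype.exists_pair_of_one_lt_card h1
  obtain ⟨p⟩ := hc.preconnected a b
  cases p with
  | nil => exact absurd rfl hab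
  | cons h q => exact ⟨_, _, h⟩

lemma walk_cross {P : V → Prop} :
    ∀ {a b : V} (_ : G.Walk a b), ¬ P a → P b → ∃ u v, G.Adj u v ∧ ¬ P u ∧ P v := by
  intro a b p
  induction p with
  | nil => intro h h'; exact absurd h' h
  | @cons u v w h q ih =>
    intro ha hb
    by_cases hv : P v
    · exact ⟨u, v, h, ha, hv⟩
    · exact ih hv hb

lemma adj_of_walk_ne {W' : Type*} {H : SimpleGraph W'} :
    ∀ {a b : W'}, H.Walk a b → a ≠ b → ∃ z, H.Adj a z := by
  intro a b p hne
  cases p with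
  | nil => exact absurd rfl hne
  | cons h q => exact ⟨_, h⟩


variable [DecidableRel G.Adj]

def Big (G : SimpleGraph V) [DecidableRel G.Adj] (v : V) : Prop :=
  Fintype.card V ≤ 2 * G.degree v

lemma adj_of_small
    (hFan : ∀ u v : V, G.dist u v = 2 →
      Fintype.card V ≤ 2 * G.degree u ∨ Fintype.card V ≤ 2 * G.degree v)
    {u v w : V} (hu : ¬ Big G u) (hv : ¬ Big G v) (huv : u ≠ v)
    (h1 : G.Adj w u) (h2 : G.Adj w v) : G.Adj u v := by
  by_contra hadj
  have hle : G.dist u v ≤ 2 := by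
    simpa using SimpleGraph.dist_le (Walk.cons h1.symm (Walk.cons h2 Walk.nil))
  have h0 : G.dist u v ≠ 0 := by
    intro h
    rw [SimpleGraph.dist_eq_zero_iff_eq_or_not_reachable] at h
    rcases h with h | h
    · exact huv h
    · exact h ⟨Walk.cons h1.symm (Walk.cons h2 Walk.nil)⟩
  have h01 : G.dist u v ≠ 1 := by
    intro h
    rw [SimpleGraph.dist_eq_one_iff_adj] at h
    exact hadj h
  have : G.dist u v = 2 := by omega
  rcases hFan u v this with h | h
  · exact hu h
  · exact hv h

lemma exists_walk_of_chain :
    ∀ (t : List V) (a : V), List.Chain G.Adj a t →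
      ∃ bb, (a :: t).getLast? = some bb ∧ ∃ p : G.Walk a bb, p.support = a :: t := by
  intro t
  induction t with
  | nil => intro a _; exact ⟨a, rfl, Walk.nil, rfl⟩
  | cons b t' ih =>
    intro a hch
    simp only [List.Chain, List.isChain_cons_cons] at hch
    obtain ⟨bb, hlast, p, hsup⟩ := ih b hch.2
    exact ⟨bb, by rw [List.getLast?_cons_cons]; exact hlast,
      Walk.cons hch.1 p, by rw [Walk.support_cons, hsup]⟩

lemma edge_not_mem_of_path :
    ∀ {a b : V} (p : G.Walk a b), p.support.Nodup → 2 ≤ p.length → s(a, b) ∉ p.edges := by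
  intro a b p
  induction p with
  | nil => simp
  | @cons u v w h q ih =>
    intro hnd hlen hmem
    rw [Walk.support_cons, List.nodup_cons] at hnd
    rw [Walk.edges_cons] at hmem
    rcases List.mem_cons.mp hmem with heq | hq
    · rw [Sym2.eq_iff] at heq
      rcases heq with ⟨_, hwv⟩ | ⟨huv, _⟩
      · subst hwv
        have : q.IsPath := Walk.isPath_def q |>.mpr hnd.2
        have : q = Walk.nil := by
          have := SimpleGraph.Path.loop_eq ⟨q, this⟩
          simpa using congrArg Subtype.val this
        subst this
        simp [Walk.length_cons] at hlen
      · exact absurd huv h.ne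
    · exact hnd.1 (Walk.fst_mem_support_of_mem_edges q hq)

lemma hamCycleOfList (m : List V) (hnd : m.Nodup) (hch : m.Chain' G.Adj)
    (hcl : ∀ a ∈ m.getLast?, ∀ b ∈ m.head?, G.Adj a b)
    (hcov : ∀ v : V, v ∈ m) (h3 : 3 ≤ Fintype.card V) : G.IsHamiltonian := by
  intro _
  have hneV : Nonempty V := by rw [← Fintype.card_pos_iff]; omega
  match m, hnd, hch, hcl, hcov with
  | [], _, _, _, hcov => exact absurd (hcov (Classical.arbitrary V)) (by simp)
  | a :: t, hnd, hch, hcl, hcov =>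
    have hch' : List.Chain G.Adj a t := hch
    obtain ⟨bb, hlast, p, hsup⟩ := exists_walk_of_chain t a hch'
    have hadj : G.Adj bb a := hcl bb hlast a rfl
    have hlen3 : 3 ≤ (a :: t).length := by
      have : (a :: t).toFinset = Finset.univ := Finset.eq_univ_iff_forall.mpr
        (by intro v; rw [List.mem_toFinset]; exact hcov v)
      have := congrArg Finset.card this
      rw [List.toFinset_card_of_nodup hnd, Finset.card_univ] at this
      omega
    have hplen : 2 ≤ p.length := by
      have := Walk.length_support p
      rw [hsup] at this
      omega
    have hpath : p.IsPath := Walk.isPath_def p |>.mpr (hsup ▸ hnd)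
    have hedge : s(bb, a) ∉ p.edges := by
      rw [Sym2.eq_swap]
      exact edge_not_mem_of_path p (hsup ▸ hnd) hplen
    refine ⟨bb, Walk.cons hadj p, ?_⟩
    rw [Walk.isHamiltonianCycle_iff_isCycle_and_support_count_tail_eq_one]
    constructor
    · exact SimpleGraph.Path.cons_isCycle ⟨p, hpath⟩ hadj hedge
    · intro v
      rw [Walk.support_cons, List.tail_cons, hsup]
      exact List.count_eq_one_of_mem hnd (hcov v)

lemma rotate_path (m : List V) (hch : m.Chain' G.Adj) (j : ℕ) (hj1 : 1 ≤ j)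
    (hjL : j < m.length) (hadj : ∀ a ∈ m[0]?, ∀ b ∈ m[j]?, G.Adj a b) :
    ∃ r : List V, r ~ m ∧ r.Chain' G.Adj ∧ r.getLast? = m.getLast? ∧
      r[0]? = m[j-1]? ∧ ∀ i, j ≤ i → r[i]? = m[i]? := by
  refine ⟨(m.take j).reverse ++ m.drop j, ?_, ?_, ?_, ?_, ?_⟩
  · exact ((m.take j).reverse_perm.append (List.Perm.refl _)).trans
      (by rw [List.take_append_drop])
  · have hch' : (m.take j ++ m.drop j).Chain' G.Adj := by rw [List.take_append_drop]; exact hch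
    rw [List.Chain', List.isChain_append] at hch'
    rw [List.Chain', List.isChain_append]
    refine ⟨?_, hch'.2.1, ?_⟩
    · rw [List.isChain_reverse]
      exact hch'.1.imp (fun _ _ h => h.symm)
    · intro a ha b hb
      rw [List.getLast?_reverse, List.head?_eq_getElem?, List.getElem?_take] at ha
      rw [List.head?_drop] at hb
      rw [if_pos (show (0:ℕ) < j from hj1)] at ha
      exact hadj a ha b hb
  · rw [List.getLast?_append_of_ne_nil]
    · rw [List.getLast?_drop, if_neg (by omega)]
    · intro h
      have := congrArg List.length h
      rw [List.length_drop] at this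
      simp at this
      omega
  · have hlt : 0 < (m.take j).reverse.length := by
      rw [List.length_reverse, List.length_take]
      omega
    rw [List.getElem?_append_left hlt, ← List.head?_eq_getElem?, List.head?_reverse,
      List.getLast?_eq_getElem?, List.length_take, List.getElem?_take]
    have : min j m.length = j := by omega
    rw [this, if_pos (by omega)]
  · intro i hi
    have hlen : (m.take j).reverse.length = j := by
      rw [List.length_reverse, List.length_take]; omega
    rw [List.getElem?_append_right (by omega), hlen, List.getElem?_drop]
    congr 1
    omega

lemma rotate_closed (m : List V) (hch : m.Chain' G.Adj)
    (hcl : ∀ a ∈ m.getLast?, ∀ b ∈ m.head?, G.Adj a b) (j : ℕ) (hj : j < m.length) :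
    ∃ r : List V, r ~ m ∧ r.Chain' G.Adj ∧ r.head? = m[j]? := by
  refine ⟨m.drop j ++ m.take j, ?_, ?_, ?_⟩
  · exact (List.perm_append_comm).trans (by rw [List.take_append_drop])
  · have hch' : (m.take j ++ m.drop j).Chain' G.Adj := by rw [List.take_append_drop]; exact hch
    rw [List.Chain', List.isChain_append] at hch'
    rw [List.Chain', List.isChain_append]
    refine ⟨hch'.2.1, hch'.1, ?_⟩
    intro a ha b hb
    rcases Nat.eq_zero_or_pos j with hj0 | hj0
    · subst hj0; simp at hb
    · rw [List.getLast?_drop, if_neg (by omega)] at ha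
      rw [List.head?_eq_getElem?, List.getElem?_take, if_pos hj0, ← List.head?_eq_getElem?] at hb
      exact hcl a ha b hb
  · have hne : m.drop j ≠ [] := by
      intro h
      have := congrArg List.length h
      rw [List.length_drop] at this
      simp at this; omega
    rw [List.head?_append_of_ne_nil _ hne, List.head?_drop]

lemma mem_of_adj_head {L : ℕ}
    (hlongest : ∀ m' : List V, m'.Nodup → m'.Chain' G.Adj → m'.length ≤ L)
    (m : List V) (hnd : m.Nodup) (hch : m.Chain' G.Adj) (hlen : m.length = L)
    (z : V) (hadj : ∀ y ∈ m.head?, G.Adj z y) : z ∈ m := by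
  by_contra hz
  have hnd' : (z :: m).Nodup := List.nodup_cons.mpr ⟨hz, hnd⟩
  have hch' : (z :: m).Chain' G.Adj := List.isChain_cons.mpr ⟨hadj, hch⟩
  have := hlongest _ hnd' hch'
  simp only [List.length_cons] at this
  omega

lemma endgame (h2 : TwoConnected G) (hconn : G.Connected) (f : ℕ → V) (L D : ℕ)
    (hinj : ∀ i j, i < L → j < L → f i = f j → i = j)
    (hD1 : 1 ≤ D) (hDL : D < L)
    (hpair : ∀ i i', i < D → i' < D → i ≠ i' → G.Adj (f i) (f i'))
    (hclosed : ∀ i, i < D → ∀ z, G.Adj (f i) z → ∃ i₂, i₂ ≤ D ∧ i₂ < L ∧ z = f i₂) :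
    G.IsHamiltonian := by
  classical
  set c := f D with hc_def
  set W : Set V := {v | ∃ i, i < D ∧ v = f i} with hW_def
  have hcW : c ∉ W := by
    rintro ⟨i, hiD, heq⟩
    have := hinj D i hDL (by omega) heq
    omega
  have hWadj : ∀ a ∈ W, ∀ b ∈ W, a ≠ b → G.Adj a b := by
    rintro a ⟨i, hi, rfl⟩ b ⟨i', hi', rfl⟩ hne
    exact hpair i i' hi hi' (fun h => hne (by rw [h]))
  have hcl : ∀ u ∈ W, ∀ v, G.Adj u v → v ∈ W ∨ v = c := by
    rintro u ⟨i, hi, rfl⟩ v hadj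
    obtain ⟨i₂, hi₂D, hi₂L, rfl⟩ := hclosed i hi v hadj
    rcases Nat.lt_or_ge i₂ D with h | h
    · exact Or.inl ⟨i₂, h, rfl⟩
    · right; rw [hc_def]; congr 1; omega
  by_cases hout : ∃ z, z ∉ W ∧ z ≠ c
  · obtain ⟨z, hz, hzc⟩ := hout
    exact absurd (h2.2 c) (not_conn_induce hcW ⟨0, by omega, rfl⟩ hz hzc hcl)
  · push_neg at hout
    have hcard : ∀ v : V, v ∈ W ∨ v = c := by
      intro v
      by_cases h : v ∈ W
      · exact Or.inl h
      · exact Or.inr (hout v h)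
    -- D ≥ 2
    have hD2 : 2 ≤ D := by
      by_contra h
      have hD : D = 1 := by omega
      have hsub : (Finset.univ : Finset V) ⊆ {f 0, c} := by
        intro v _
        rcases hcard v with ⟨i, hi, rfl⟩ | rfl
        · have : i = 0 := by omega
          subst this; simp
        · simp
      have hle := Finset.card_le_card hsub
      have h2' : ({f 0, c} : Finset V).card ≤ 2 :=
        (Finset.card_insert_le _ _).trans (by simp)
      rw [Finset.card_univ] at hle
      have h3 := h2.1
      omega
    -- a neighbor of c
    have hfc : ∀ i, i < D → f i ≠ c := fun i hi h => hcW ⟨i, hi, h.symm⟩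
    obtain ⟨u, hu_adj, hu_W⟩ : ∃ u, G.Adj c u ∧ u ∈ W := by
      obtain ⟨p⟩ := hconn.preconnected c (f 0)
      obtain ⟨z, hz⟩ := adj_of_walk_ne p (fun h => hfc 0 (by omega) h.symm)
      refine ⟨z, hz, ?_⟩
      rcases hcard z with h | h
      · exact h
      · exact absurd h.symm hz.ne
    obtain ⟨i₀, hi₀, rfl⟩ := hu_W
    -- a second neighbor of c
    obtain ⟨u', hu'_adj, hu'_W, hu'_ne⟩ : ∃ u', G.Adj c u' ∧ u' ∈ W ∧ u' ≠ f i₀ := by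
      by_contra hno
      push_neg at hno
      have honly : ∀ z, G.Adj c z → z = f i₀ := by
        intro z hz
        rcases hcard z with hzW | hzc
        · by_contra hne
          exact hne (hno z hz hzW)
        · exact absurd hzc.symm hz.ne
      set i₁ : ℕ := if i₀ = 0 then 1 else 0 with hi₁_def
      have hi₁D : i₁ < D := by
        rw [hi₁_def]; split <;> omega
      have hi₁ne : i₁ ≠ i₀ := by
        rw [hi₁_def]; split
        · omega
        · omega
      have hcne : c ≠ f i₁ := fun h => hfc i₁ hi₁D h.symm
      have hcneu : c ≠ f i₀ := fun h => hfc i₀ hi₀ h.symm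
      have hfine : f i₁ ≠ f i₀ := fun h => hi₁ne (hinj i₁ i₀ (by omega) (by omega) h)
      obtain ⟨p⟩ := (h2.2 (f i₀)).preconnected
        ⟨c, hcneu⟩ ⟨f i₁, hfine⟩
      obtain ⟨z, hz⟩ := adj_of_walk_ne p
        (fun h => hcne (congrArg Subtype.val h))
      have hadj : G.Adj c (z : V) := hz
      exact z.2 (honly _ hadj)
    obtain ⟨i₁', hi₁', rfl⟩ := hu'_W
    -- build the hamiltonian list
    set mid : List V := ((((Finset.univ : Finset V).erase c).erase (f i₀)).erase (f i₁')).toList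
      with hmid_def
    have hmid_mem : ∀ v, v ∈ mid ↔ v ≠ f i₁' ∧ v ≠ f i₀ ∧ v ≠ c := by
      intro v
      rw [hmid_def]
      simp only [Finset.mem_toList, Finset.mem_erase, Finset.mem_univ, and_true]
    set P1 : List V := f i₀ :: (mid ++ [f i₁']) with hP1_def
    set m : List V := P1 ++ [c] with hm_def
    have hmidW : ∀ v ∈ mid, v ∈ W := by
      intro v hv
      rw [hmid_mem] at hv
      rcases hcard v with h | h
      · exact h
      · exact absurd h hv.2.2
    have hP1W : ∀ v ∈ P1, v ∈ W := by
      intro v hv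
      rw [hP1_def] at hv
      rcases List.mem_cons.mp hv with rfl | hv
      · exact ⟨i₀, hi₀, rfl⟩
      · rcases List.mem_append.mp hv with hv | hv
        · exact hmidW v hv
        · rw [List.mem_singleton] at hv
          subst hv
          exact ⟨i₁', hi₁', rfl⟩
    have hmid_nd : mid.Nodup := Finset.nodup_toList _
    have hP1_nd : P1.Nodup := by
      rw [hP1_def]
      refine List.nodup_cons.mpr ⟨?_, ?_⟩
      · intro h
        rcases List.mem_append.mp h with h | h
        · exact ((hmid_mem _).mp h).2.1 rfl
        · rw [List.mem_singleton] at h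
          exact hu'_ne h.symm
      · refine List.nodup_append'.mpr ⟨hmid_nd, List.nodup_singleton _, ?_⟩
        intro a ha hb
        rw [List.mem_singleton] at hb
        subst hb
        exact ((hmid_mem _).mp ha).1 rfl
    have hm_nd : m.Nodup := by
      rw [hm_def]
      refine List.nodup_append'.mpr ⟨hP1_nd, List.nodup_singleton _, ?_⟩
      intro a ha hb
      rw [List.mem_singleton] at hb
      subst hb
      exact hcW (hP1W _ ha)
    have hP1_ch : P1.Chain' G.Adj := by
      apply List.Pairwise.isChain
      apply List.Pairwise.imp_of_mem (R := fun a b => a ≠ b)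
      · intro a b ha hb hne
        exact hWadj a (hP1W a ha) b (hP1W b hb) hne
      · exact hP1_nd
    have hm_ch : m.Chain' G.Adj := by
      rw [hm_def, List.Chain', List.isChain_append]
      refine ⟨hP1_ch, List.isChain_singleton _, ?_⟩
      intro a ha b hb
      rw [List.head?_cons, Option.mem_some_iff] at hb
      subst hb
      have : P1.getLast? = some (f i₁') := by
        rw [hP1_def, show f i₀ :: (mid ++ [f i₁']) = (f i₀ :: mid) ++ [f i₁'] from rfl,
          List.getLast?_concat]
      rw [this, Option.mem_some_iff] at ha
      subst ha
      exact hu'_adj.symm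
    have hm_last : m.getLast? = some c := by
      rw [hm_def, List.getLast?_concat]
    have hm_head : m.head? = some (f i₀) := by
      rw [hm_def, hP1_def]; rfl
    apply hamCycleOfList m hm_nd hm_ch
    · intro a ha b hb
      rw [hm_last, Option.mem_some_iff] at ha
      rw [hm_head, Option.mem_some_iff] at hb
      subst ha; subst hb
      exact hu_adj
    · intro v
      rw [hm_def, hP1_def]
      by_cases h1 : v = f i₀
      · subst h1; simp
      · by_cases h2 : v = f i₁'
        · subst h2; simp
        · by_cases h3 : v = c
          · subst h3; simp
          · have : v ∈ mid := (hmid_mem v).mpr ⟨h2, h1, h3⟩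
            simp [this]
    · exact h2.1

lemma lemmaR (h2 : TwoConnected G)
    (hFan : ∀ u v : V, G.dist u v = 2 →
      Fintype.card V ≤ 2 * G.degree u ∨ Fintype.card V ≤ 2 * G.degree v)
    (hconn : G.Connected) (d₀ : V)
    (l : List V) (hnd : l.Nodup) (hch : l.Chain' G.Adj) (hL2 : 2 ≤ l.length)
    (hlongest : ∀ m : List V, m.Nodup → m.Chain' G.Adj → m.length ≤ l.length) :
    G.IsHamiltonian ∨
      ∃ m : List V, m ~ l ∧ m.Chain' G.Adj ∧ m.getLast? = l.getLast? ∧ Big G (m.getD 0 d₀) := by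
  classical
  by_cases hbig : ∃ m : List V, m ~ l ∧ m.Chain' G.Adj ∧ m.getLast? = l.getLast? ∧
      Big G (m.getD 0 d₀)
  · exact Or.inr hbig
  push_neg at hbig
  left
  set L := l.length with hL_def
  set x : ℕ → V := fun i => l.getD i d₀ with hx_def
  have hx_get : ∀ i, i < L → l[i]? = some (x i) := by
    intro i hi
    rw [List.getElem?_eq_getElem hi]
    exact congrArg some (List.getD_eq_getElem l d₀ hi).symm
  have hinj : ∀ i j, i < L → j < L → x i = x j → i = j := by
    intro i j hi hj heq
    have h1 := hx_get i hi
    have h2 := hx_get j hj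
    have : l[i]'hi = l[j]'hj := by
      rw [hx_def] at heq
      rw [← List.getD_eq_getElem l d₀ hi, ← List.getD_eq_getElem l d₀ hj]
      exact heq
    have := (List.Nodup.get_inj_iff hnd (i := ⟨i, hi⟩) (j := ⟨j, hj⟩)).mp (by simpa using this)
    simpa using this
  have hchain : ∀ i, i + 1 < L → G.Adj (x i) (x (i+1)) := by
    intro i hi
    have := List.isChain_iff_getElem.mp hch i (by omega)
    have e1 : x i = l[i]'(by omega) := List.getD_eq_getElem l d₀ (by omega)
    have e2 : x (i+1) = l[i+1]'hi := List.getD_eq_getElem l d₀ hi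
    rw [e1, e2]
    simpa [List.get_eq_getElem] using this
  have hmem_iff : ∀ z : V, z ∈ l → ∃ i, i < L ∧ z = x i := by
    intro z hz
    obtain ⟨n, hn⟩ := List.mem_iff_getElem?.mp hz
    have hnL : n < L := by
      by_contra h
      rw [List.getElem?_eq_none (by omega)] at hn
      cases hn
    refine ⟨n, hnL, ?_⟩
    rw [hx_get n hnL] at hn
    exact (Option.some_inj.mp hn).symm
  -- endpoint predicate
  set Ept : V → ℕ → Prop := fun u t => ∃ m : List V, m ~ l ∧ m.Chain' G.Adj ∧
    m.getLast? = l.getLast? ∧ m[0]? = some u ∧ ∀ i, t ≤ i → m[i]? = l[i]? with hEpt_def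
  have hE0 : Ept (x 0) 0 := ⟨l, List.Perm.refl l, hch, rfl, hx_get 0 (by omega), fun i _ => rfl⟩
  have hEstep : ∀ u t, Ept u t → ∀ i, t + 1 ≤ i → i < L → G.Adj u (x i) → Ept (x (i-1)) i := by
    rintro u t ⟨m, hperm, hmch, hmlast, hm0, hmtail⟩ i hti hiL hadj
    have hmlen : m.length = L := hperm.length_eq
    obtain ⟨r, hr_perm, hr_ch, hr_last, hr_0, hr_tail⟩ := rotate_path m hmch i (by omega)
      (by omega) (by
        intro a ha b hb
        rw [hm0, Option.mem_some_iff] at ha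
        rw [hmtail i (by omega), hx_get i hiL, Option.mem_some_iff] at hb
        subst ha; subst hb
        exact hadj)
    refine ⟨r, hr_perm.trans hperm, hr_ch, hr_last.trans hmlast, ?_, ?_⟩
    · rw [hr_0, hmtail (i-1) (by omega), hx_get (i-1) (by omega)]
    · intro i' hi'
      rw [hr_tail i' (by omega), hmtail i' (by omega)]
  have hEbig : ∀ u t, Ept u t → ¬ Big G u := by
    rintro u t ⟨m, hperm, hmch, hmlast, hm0, _⟩ hb
    refine hbig m hperm hmch hmlast ?_
    rwa [List.getD_eq_getElem?_getD, hm0]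
  have hEmem : ∀ u t, Ept u t → ∀ z, G.Adj z u → z ∈ l := by
    rintro u t ⟨m, hperm, hmch, hmlast, hm0, _⟩ z hadj
    have := mem_of_adj_head hlongest m (hperm.nodup_iff.mpr hnd) hmch hperm.length_eq z (by
      intro y hy
      rw [List.head?_eq_getElem?, hm0, Option.mem_some_iff] at hy
      subst hy; exact hadj)
    exact hperm.mem_iff.mp this
  -- the neighbor-position set of x 0
  set S : Finset ℕ := (Finset.Ico 1 L).filter (fun j => G.Adj (x 0) (x j)) with hS_def
  have hSmem : ∀ j, j ∈ S ↔ 1 ≤ j ∧ j < L ∧ G.Adj (x 0) (x j) := by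
    intro j
    rw [hS_def]
    simp [Finset.mem_filter, Finset.mem_Ico, and_assoc]
  have h1S : 1 ∈ S := (hSmem 1).mpr ⟨le_refl 1, by omega, hchain 0 (by omega)⟩
  have hjrot : ∀ j ∈ S, Ept (x (j-1)) j := by
    intro j hj
    rw [hSmem] at hj
    exact hEstep (x 0) 0 hE0 j (by omega) hj.2.1 hj.2.2
  have hsm : ∀ j ∈ S, ¬ Big G (x (j-1)) := fun j hj => hEbig _ _ (hjrot j hj)
  have hsm0 : ¬ Big G (x 0) := hEbig _ _ hE0
  have hdown : ∀ j ∈ S, 2 ≤ j → j - 1 ∈ S := by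
    intro j hj h2j
    have hjS := (hSmem j).mp hj
    have hne : x 0 ≠ x (j-1) := by
      intro h
      have := hinj 0 (j-1) (by omega) (by omega) h
      omega
    have hadj1 : G.Adj (x j) (x 0) := hjS.2.2.symm
    have hadj2 : G.Adj (x j) (x (j-1)) := by
      have := hchain (j-1) (by omega)
      have hrw : j - 1 + 1 = j := by omega
      rw [hrw] at this
      exact this.symm
    have := adj_of_small hFan hsm0 (hsm j hj) hne hadj1 hadj2
    exact (hSmem (j-1)).mpr ⟨by omega, by omega, this⟩
  set d : ℕ := S.max' ⟨1, h1S⟩ with hd_def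
  have hdS : d ∈ S := S.max'_mem ⟨1, h1S⟩
  have hd_max : ∀ j ∈ S, j ≤ d := fun j hj => S.le_max' j hj
  have hd1 : 1 ≤ d := ((hSmem d).mp hdS).1
  have hdL : d < L := ((hSmem d).mp hdS).2.1
  have hIccS : ∀ i, 1 ≤ i → i ≤ d → i ∈ S := by
    have key : ∀ k : ℕ, ∀ i, 1 ≤ i → i + k = d → i ∈ S := by
      intro k
      induction k with
      | zero => intro i h1 h2; have : i = d := by omega
                subst this; exact hdS
      | succ k ih =>
        intro i h1 h2
        have hi1 : i + 1 ∈ S := ih (i+1) (by omega) (by omega)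
        have := hdown (i+1) hi1 (by omega)
        simpa using this
    intro i h1 h2
    exact key (d - i) i h1 (by omega)
  have hadj0 : ∀ i, 1 ≤ i → i ≤ d → G.Adj (x 0) (x i) := by
    intro i h1 h2
    exact ((hSmem i).mp (hIccS i h1 h2)).2.2
  have hsmall' : ∀ i, i ≤ d - 1 → ¬ Big G (x i) := by
    intro i hi
    rcases Nat.eq_zero_or_pos i with rfl | hpos
    · exact hsm0
    · have : i + 1 ∈ S := hIccS (i+1) (by omega) (by omega)
      have := hsm (i+1) this
      simpa using this
  have hS_bound : ∀ i, i < L → G.Adj (x 0) (x i) → i ≤ d := by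
    intro i hiL hadj
    rcases Nat.eq_zero_or_pos i with rfl | hpos
    · omega
    · exact hd_max i ((hSmem i).mpr ⟨hpos, hiL, hadj⟩)
  have hfar : ∀ u t, Ept u t → (u = x 0 ∨ G.Adj u (x 0)) → ¬ Big G u →
      ∀ i, t + 1 ≤ i → i < L → d + 2 ≤ i → x (i-1) ≠ u → ¬ G.Adj u (x i) := by
    intro u t hE hu0 husm i hti hiL hdi hne hadj
    have hE' : Ept (x (i-1)) i := hEstep u t hE i hti hiL hadj
    have hsm' : ¬ Big G (x (i-1)) := hEbig _ _ hE'
    have hchain' : G.Adj (x i) (x (i-1)) := by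
      have := hchain (i-1) (by omega)
      have hrw : i - 1 + 1 = i := by omega
      rw [hrw] at this
      exact this.symm
    have hadj1 : G.Adj (x (i-1)) u :=
      adj_of_small hFan hsm' husm hne hchain' hadj.symm
    have hadj2 : G.Adj (x 0) (x (i-1)) := by
      rcases hu0 with rfl | hu0adj
      · exact hadj1.symm
      · have hne0 : x (i-1) ≠ x 0 := by
          intro h
          have := hinj (i-1) 0 (by omega) (by omega) h
          omega
        exact (adj_of_small hFan hsm' hsm0 hne0 hadj1.symm hu0adj).symm
    have := hS_bound (i-1) (by omega) hadj2
    omega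
  -- the two cases
  have hEi : ∀ i, i ≤ d - 1 → Ept (x i) (i+1) := by
    intro i hi
    have : i + 1 ∈ S := hIccS (i+1) (by omega) (by omega)
    have := hjrot (i+1) this
    simpa using this
  have main : ∃ D, 1 ≤ D ∧ D < L ∧
      (∀ i i', i < D → i' < D → i ≠ i' → G.Adj (x i) (x i')) ∧
      (∀ i, i < D → ∀ z, G.Adj (x i) z → ∃ i₂, i₂ ≤ D ∧ i₂ < L ∧ z = x i₂) := by
    have hpair_small : ∀ i i', 1 ≤ i → i ≤ d → 1 ≤ i' → i' ≤ d → i ≠ i' →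
        ¬ Big G (x i) → ¬ Big G (x i') → G.Adj (x i) (x i') := by
      intro i i' h1 h2 h1' h2' hne hbi hbi'
      have hnexx : x i ≠ x i' := by
        intro h
        exact hne (hinj i i' (by omega) (by omega) h)
      exact adj_of_small hFan hbi hbi' hnexx (hadj0 i h1 h2) (hadj0 i' h1' h2')
    by_cases htrig : ∃ j ∈ S, d + 1 < L ∧ G.Adj (x (j-1)) (x (d+1))
    · -- extended clique case: D = d + 1
      obtain ⟨j₀, hj₀S, hdL1, htadj⟩ := htrig
      have hj₀ := (hSmem j₀).mp hj₀S
      have hExd : Ept (x d) (d+1) := by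
        have := hEstep (x (j₀-1)) j₀ (hjrot j₀ hj₀S) (d+1)
          (by have := hd_max j₀ hj₀S; omega) (by omega) htadj
        simpa using this
      have hxd_small : ¬ Big G (x d) := hEbig _ _ hExd
      have hsmalld : ∀ i, i ≤ d → ¬ Big G (x i) := by
        intro i hi
        rcases Nat.lt_or_ge i d with h | h
        · exact hsmall' i (by omega)
        · have : i = d := by omega
          subst this; exact hxd_small
      have hEid : ∀ i, i ≤ d → Ept (x i) (i+1) := by
        intro i hi
        rcases Nat.lt_or_ge i d with h | h
        · exact hEi i (by omega)
        · have : i = d := by omega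
          subst this; exact hExd
      refine ⟨d+1, by omega, by omega, ?_, ?_⟩
      · intro i i' hi hi' hne
        rcases Nat.eq_zero_or_pos i with rfl | hposi
        · exact hadj0 i' (by omega) (by omega)
        · rcases Nat.eq_zero_or_pos i' with rfl | hposi'
          · exact (hadj0 i (by omega) (by omega)).symm
          · exact hpair_small i i' (by omega) (by omega) (by omega) (by omega) hne
              (hsmalld i (by omega)) (hsmalld i' (by omega))
      · intro i hi z hadj
        obtain ⟨i₂, hi₂L, rfl⟩ := hmem_iff z (hEmem _ _ (hEid i (by omega)) z hadj.symm)
        refine ⟨i₂, ?_, hi₂L, rfl⟩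
        by_contra hgt
        have hd2 : d + 2 ≤ i₂ := by omega
        have hu0 : x i = x 0 ∨ G.Adj (x i) (x 0) := by
          rcases Nat.eq_zero_or_pos i with rfl | hposi
          · exact Or.inl rfl
          · exact Or.inr (hadj0 i (by omega) (by omega)).symm
        have hne12 : x (i₂ - 1) ≠ x i := by
          intro h
          have := hinj (i₂-1) i (by omega) (by omega) h
          omega
        exact hfar (x i) (i+1) (hEid i (by omega)) hu0 (hsmalld i (by omega)) i₂
          (by omega) hi₂L hd2 hne12 hadj
    · -- D = d
      push_neg at htrig
      refine ⟨d, hd1, hdL, ?_, ?_⟩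
      · intro i i' hi hi' hne
        rcases Nat.eq_zero_or_pos i with rfl | hposi
        · exact hadj0 i' (by omega) (by omega)
        · rcases Nat.eq_zero_or_pos i' with rfl | hposi'
          · exact (hadj0 i (by omega) (by omega)).symm
          · exact hpair_small i i' (by omega) (by omega) (by omega) (by omega) hne
              (hsmall' i (by omega)) (hsmall' i' (by omega))
      · intro i hi z hadj
        obtain ⟨i₂, hi₂L, rfl⟩ := hmem_iff z (hEmem _ _ (hEi i (by omega)) z hadj.symm)
        refine ⟨i₂, ?_, hi₂L, rfl⟩
        by_contra hgt
        have hu0 : x i = x 0 ∨ G.Adj (x i) (x 0) := by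
          rcases Nat.eq_zero_or_pos i with rfl | hposi
          · exact Or.inl rfl
          · exact Or.inr (hadj0 i (by omega) (by omega)).symm
        rcases Nat.lt_or_ge i₂ (d+2) with hcase | hcase
        · -- i₂ = d + 1 : contradiction with ¬htrig
          have hi₂d : i₂ = d + 1 := by omega
          subst hi₂d
          refine htrig (i+1) (hIccS (i+1) (by omega) (by omega)) (by omega) ?_
          simpa using hadj
        · have hne12 : x (i₂ - 1) ≠ x i := by
            intro h
            have := hinj (i₂-1) i (by omega) (by omega) h
            omega
          exact hfar (x i) (i+1) (hEi i (by omega)) hu0 (hsmall' i (by omega)) i₂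
            (by omega) hi₂L hcase hne12 hadj
  obtain ⟨D, hD1, hDL, hpair, hclosed⟩ := main
  exact endgame h2 hconn x L D hinj hD1 hDL hpair hclosed

theorem fan_main (h2 : TwoConnected G)
    (hFan : ∀ u v : V, G.dist u v = 2 →
      Fintype.card V ≤ 2 * G.degree u ∨ Fintype.card V ≤ 2 * G.degree v) :
    G.IsHamiltonian := by
  classical
  have h3 : 3 ≤ Fintype.card V := h2.1
  have hconn : G.Connected := connected_of_two h3 h2.2
  have hneV : Nonempty V := by rw [← Fintype.card_pos_iff]; omega
  set n := Fintype.card V with hn_def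
  obtain ⟨d₀⟩ := hneV
  set P : ℕ → Prop := fun k => ∃ m : List V, m.Nodup ∧ m.Chain' G.Adj ∧ m.length = k
    with hP_def
  obtain ⟨a, b, hab⟩ := exists_adj hconn (by omega)
  have hP2 : P 2 := ⟨[a, b], by simp [hab.ne], by simp [List.Chain', hab], rfl⟩
  set K := Nat.findGreatest P n with hK_def
  have hK2 : 2 ≤ K := Nat.le_findGreatest (by omega) hP2
  have hPK : P K := Nat.findGreatest_spec (show 2 ≤ n by omega) hP2
  have hlongest : ∀ m : List V, m.Nodup → m.Chain' G.Adj → m.length ≤ K := by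
    intro m h1 hch
    exact Nat.le_findGreatest h1.length_le_card ⟨m, h1, hch, rfl⟩
  obtain ⟨l, hl_nd, hl_ch, hl_len⟩ := hPK
  -- first application of lemma R
  rcases lemmaR h2 hFan hconn d₀ l hl_nd hl_ch (by omega) (by rw [hl_len]; exact hlongest)
    with hham | ⟨m₁, hm₁_perm, hm₁_ch, hm₁_last, hm₁_big⟩
  · exact hham
  have hm₁_nd : m₁.Nodup := hm₁_perm.nodup_iff.mpr hl_nd
  have hm₁_len : m₁.length = K := by rw [hm₁_perm.length_eq, hl_len]
  -- second application, on the reverse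
  have hrev_nd : m₁.reverse.Nodup := by rwa [List.nodup_reverse]
  have hrev_ch : m₁.reverse.Chain' G.Adj := by
    rw [List.Chain', List.isChain_reverse]
    exact hm₁_ch.imp (fun _ _ h => h.symm)
  have hrev_len : m₁.reverse.length = K := by rwa [List.length_reverse]
  rcases lemmaR h2 hFan hconn d₀ m₁.reverse hrev_nd hrev_ch (by omega)
    (by rw [hrev_len]; exact hlongest)
    with hham | ⟨F, hF_perm, hF_ch, hF_last, hF_big⟩
  · exact hham
  have hF_nd : F.Nodup := hF_perm.nodup_iff.mpr hrev_nd
  have hF_len : F.length = K := by rw [hF_perm.length_eq, hrev_len]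
  -- setup index machinery on F
  set y : ℕ → V := fun i => F.getD i d₀ with hy_def
  have hy_get : ∀ i, i < K → F[i]? = some (y i) := by
    intro i hi
    rw [List.getElem?_eq_getElem (by omega)]
    exact congrArg some (List.getD_eq_getElem F d₀ (by omega)).symm
  have hinj : ∀ i j, i < K → j < K → y i = y j → i = j := by
    intro i j hi hj heq
    have : F[i]'(by omega) = F[j]'(by omega) := by
      rw [← List.getD_eq_getElem F d₀, ← List.getD_eq_getElem F d₀]
      exact heq
    have := (List.Nodup.get_inj_iff hF_nd
      (i := ⟨i, by omega⟩) (j := ⟨j, by omega⟩)).mp (by simpa using this)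
    simpa using this
  have hmemF : ∀ z : V, z ∈ F → ∃ i, i < K ∧ z = y i := by
    intro z hz
    obtain ⟨i, hi⟩ := List.mem_iff_getElem?.mp hz
    have hiK : i < K := by
      by_contra h
      rw [List.getElem?_eq_none (by omega)] at hi
      cases hi
    rw [hy_get i hiK] at hi
    exact ⟨i, hiK, (Option.some_inj.mp hi).symm⟩
  have hF_head : F.head? = some (y 0) := by
    rw [List.head?_eq_getElem?]; exact hy_get 0 (by omega)
  have hF_lasty : F.getLast? = some (y (K-1)) := by
    rw [List.getLast?_eq_getElem?, hF_len]
    exact hy_get (K-1) (by omega)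
  -- both endpoints are big
  have hbig_head : Big G (y 0) := hF_big
  have hbig_last : Big G (y (K-1)) := by
    have h1 : m₁.reverse.getLast? = some (m₁.getD 0 d₀) := by
      rw [List.getLast?_reverse, List.head?_eq_getElem?,
        List.getElem?_eq_getElem (show 0 < m₁.length by omega)]
      exact congrArg some (List.getD_eq_getElem m₁ d₀ (by omega)).symm
    rw [hF_last, h1] at hF_lasty
    rw [Option.some_inj] at hF_lasty
    rwa [← hF_lasty]
  -- all neighbors of the endpoints lie on F
  have hnbr_head : ∀ z, G.Adj z (y 0) → z ∈ F := by
    intro z hz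
    exact mem_of_adj_head hlongest F hF_nd hF_ch hF_len z (by
      intro w hw
      rw [hF_head, Option.mem_some_iff] at hw
      subst hw; exact hz)
  have hnbr_last : ∀ z, G.Adj z (y (K-1)) → z ∈ F := by
    intro z hz
    have : z ∈ F.reverse := by
      apply mem_of_adj_head hlongest F.reverse (by rwa [List.nodup_reverse])
        (by rw [List.Chain', List.isChain_reverse]; exact hF_ch.imp (fun _ _ h => h.symm))
        (by rwa [List.length_reverse]) z
      intro w hw
      rw [List.head?_reverse, hF_lasty, Option.mem_some_iff] at hw
      subst hw; exact hz
    rwa [List.mem_reverse] at this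
  -- the crossing sets
  set A : Finset ℕ := (Finset.Ico 1 K).filter (fun i => G.Adj (y 0) (y i)) with hA_def
  set B : Finset ℕ := (Finset.Ico 1 K).filter (fun i => G.Adj (y (K-1)) (y (i-1))) with hB_def
  have hA_card : A.card = G.degree (y 0) := by
    rw [← SimpleGraph.card_neighborFinset_eq_degree]
    apply Finset.card_bij (fun i _ => y i)
    · intro i hi
      rw [hA_def, Finset.mem_filter] at hi
      rw [SimpleGraph.mem_neighborFinset]
      exact hi.2
    · intro i hi j hj heq
      rw [hA_def, Finset.mem_filter, Finset.mem_Ico] at hi hj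
      exact hinj i j (by omega) (by omega) heq
    · intro v hv
      rw [SimpleGraph.mem_neighborFinset] at hv
      obtain ⟨i, hiK, rfl⟩ := hmemF v (hnbr_head v hv.symm)
      have hi0 : i ≠ 0 := by
        intro h; subst h; exact G.irrefl hv
      exact ⟨i, by rw [hA_def, Finset.mem_filter, Finset.mem_Ico]
                   exact ⟨⟨by omega, hiK⟩, hv⟩, rfl⟩
  have hB_card : B.card = G.degree (y (K-1)) := by
    rw [← SimpleGraph.card_neighborFinset_eq_degree]
    apply Finset.card_bij (fun i _ => y (i-1))
    · intro i hi
      rw [hB_def, Finset.mem_filter] at hi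
      rw [SimpleGraph.mem_neighborFinset]
      exact hi.2
    · intro i hi j hj heq
      rw [hB_def, Finset.mem_filter, Finset.mem_Ico] at hi hj
      have := hinj (i-1) (j-1) (by omega) (by omega) heq
      omega
    · intro v hv
      rw [SimpleGraph.mem_neighborFinset] at hv
      obtain ⟨i, hiK, rfl⟩ := hmemF v (hnbr_last v hv.symm)
      have hiK1 : i ≠ K - 1 := by
        intro h; subst h; exact G.irrefl hv
      refine ⟨i+1, ?_, by simp⟩
      rw [hB_def, Finset.mem_filter, Finset.mem_Ico]
      constructor
      · exact ⟨by omega, by omega⟩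
      · simpa using hv
  -- a crossing exists
  have hKn : K ≤ n := by rw [← hF_len]; exact hF_nd.length_le_card
  have hsum : n ≤ G.degree (y 0) + G.degree (y (K-1)) := by
    have b1 : n ≤ 2 * G.degree (y 0) := hbig_head
    have b2 : n ≤ 2 * G.degree (y (K-1)) := hbig_last
    omega
  have hcross : ∃ i, i ∈ A ∧ i ∈ B := by
    rw [← Finset.not_disjoint_iff]
    intro hdisj
    have hsub : A ∪ B ⊆ Finset.Ico 1 K := by
      intro i hi
      rcases Finset.mem_union.mp hi with h | h
      · rw [hA_def, Finset.mem_filter] at h; exact h.1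
      · rw [hB_def, Finset.mem_filter] at h; exact h.1
    have := Finset.card_le_card hsub
    rw [Finset.card_union_of_disjoint hdisj, Nat.card_Ico] at this
    omega
  obtain ⟨i, hiA, hiB⟩ := hcross
  rw [hA_def, Finset.mem_filter, Finset.mem_Ico] at hiA
  rw [hB_def, Finset.mem_filter, Finset.mem_Ico] at hiB
  -- rotate to get a cycle list
  obtain ⟨r, hr_perm, hr_ch, hr_last, hr_0, _⟩ := rotate_path F hF_ch i (by omega)
    (by omega) (by
      intro p hp q hq
      rw [hy_get 0 (by omega), Option.mem_some_iff] at hp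
      rw [hy_get i (by omega), Option.mem_some_iff] at hq
      subst hp; subst hq
      exact hiA.2)
  have hr_close : ∀ p ∈ r.getLast?, ∀ q ∈ r.head?, G.Adj p q := by
    intro p hp q hq
    rw [hr_last, hF_lasty, Option.mem_some_iff] at hp
    rw [List.head?_eq_getElem?, hr_0, hy_get (i-1) (by omega), Option.mem_some_iff] at hq
    subst hp; subst hq
    exact hiB.2
  have hr_nd : r.Nodup := (hr_perm.nodup_iff).mpr hF_nd
  have hr_len : r.length = K := by rw [hr_perm.length_eq, hF_len]
  by_cases hKn' : K = n
  · -- Hamilton cycle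
    apply hamCycleOfList r hr_nd hr_ch hr_close _ h3
    intro v
    have : r.toFinset = Finset.univ := by
      apply Finset.eq_univ_of_card
      rw [List.toFinset_card_of_nodup hr_nd, hr_len, hKn']
    rw [← List.mem_toFinset, this]
    exact Finset.mem_univ v
  · -- extend to a longer path : contradiction
    exfalso
    have hKn2 : K < n := by omega
    have hzout : ∃ z : V, z ∉ r := by
      by_contra h
      push_neg at h
      have : r.toFinset = Finset.univ := Finset.eq_univ_iff_forall.mpr
        (fun v => List.mem_toFinset.mpr (h v))
      have := congrArg Finset.card this
      rw [List.toFinset_card_of_nodup hr_nd, hr_len, Finset.card_univ] at this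
      omega
    obtain ⟨z, hz⟩ := hzout
    have hy0r : y 0 ∈ r := hr_perm.mem_iff.mpr (by
      have := hy_get 0 (by omega)
      exact List.mem_iff_getElem?.mpr ⟨0, this⟩)
    obtain ⟨p⟩ := hconn.preconnected z (y 0)
    obtain ⟨u, v, huv, hu, hv⟩ := walk_cross p hz hy0r
    obtain ⟨j, hj⟩ := List.mem_iff_getElem?.mp hv
    have hjK : j < r.length := by
      by_contra h
      rw [List.getElem?_eq_none (by omega)] at hj
      cases hj
    obtain ⟨r2, hr2_perm, hr2_ch, hr2_head⟩ := rotate_closed r hr_ch hr_close j hjK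
    have hnd2 : (u :: r2).Nodup := List.nodup_cons.mpr
      ⟨fun h => hu (hr2_perm.mem_iff.mp h), hr2_perm.nodup_iff.mpr hr_nd⟩
    have hch2 : (u :: r2).Chain' G.Adj := List.isChain_cons.mpr ⟨(by
      intro w hw
      rw [hr2_head, hj, Option.mem_some_iff] at hw
      subst hw; exact huv), hr2_ch⟩
    have := hlongest _ hnd2 hch2
    rw [List.length_cons, hr2_perm.length_eq, hr_len] at this
    omega


end FanProofAux

/-- **Fan's theorem.** -/
theorem fan_hamiltonian {V : Type*} [Fintype V] [DecidableEq V]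
    (G : SimpleGraph V) [DecidableRel G.Adj]
    (h2 : TwoConnected G)
    (hFan : ∀ u v : V, G.dist u v = 2 →
      Fintype.card V ≤ 2 * G.degree u ∨ Fintype.card V ≤ 2 * G.degree v) :
    G.IsHamiltonian :=
  FanProofAux.fan_main h2 hFan
end

section
/- Let G be a 2-connected claw-free graph. If |N(u) ∩ N(v)| ≥ 2 for every pair of vertices u, v with distance exactly 2 in G, then G is Hamiltonian. -/
set_option linter.unusedSectionVars false
set_option linter.unusedVariables false

open SimpleGraph

/-- `c, a, b, d` form an induced claw (`K_{1,3}`) in `G` with center `c` and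
end-vertices `a`, `b`, `d`. -/
def IsInducedClaw {V : Type*} (G : SimpleGraph V) (c a b d : V) : Prop :=
  a ≠ b ∧ a ≠ d ∧ b ≠ d ∧
  G.Adj c a ∧ G.Adj c b ∧ G.Adj c d ∧
  ¬G.Adj a b ∧ ¬G.Adj a d ∧ ¬G.Adj b d

/-- `a₁, a₂, a₃, b₁` form an induced copy of `Z₁` in `G`: triangle `a₁a₂a₃` with
pendant edge `a₁b₁`. -/
def IsInducedZ1 {V : Type*} (G : SimpleGraph V) (a1 a2 a3 b1 : V) : Prop :=
  G.Adj a1 a2 ∧ G.Adj a1 a3 ∧ G.Adj a2 a3 ∧ G.Adj a1 b1 ∧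
  b1 ≠ a2 ∧ b1 ≠ a3 ∧ ¬G.Adj b1 a2 ∧ ¬G.Adj b1 a3

/-- `a₁, a₂, a₃, b₁, c₁` form an induced copy of `Z₂` in `G`: triangle `a₁a₂a₃`
with path `a₁b₁c₁` attached at `a₁`. -/
def IsInducedZ2 {V : Type*} (G : SimpleGraph V) (a1 a2 a3 b1 c1 : V) : Prop :=
  G.Adj a1 a2 ∧ G.Adj a1 a3 ∧ G.Adj a2 a3 ∧ G.Adj a1 b1 ∧ G.Adj b1 c1 ∧
  b1 ≠ a2 ∧ b1 ≠ a3 ∧ c1 ≠ a1 ∧ c1 ≠ a2 ∧ c1 ≠ a3 ∧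
  ¬G.Adj b1 a2 ∧ ¬G.Adj b1 a3 ∧ ¬G.Adj c1 a1 ∧ ¬G.Adj c1 a2 ∧ ¬G.Adj c1 a3

namespace ShiProof
open List

variable {V : Type*}

/-- last vertex of `a :: l` -/
def lst : V → List V → V
  | a, [] => a
  | _, c :: l => lst c l

@[simp] lemma lst_nil (a : V) : lst a [] = a := rfl
@[simp] lemma lst_cons (a c : V) (l : List V) : lst a (c :: l) = lst c l := rfl

lemma lst_append (a : V) (l₁ l₂ : List V) : lst a (l₁ ++ l₂) = lst (lst a l₁) l₂ := by
  induction l₁ generalizing a with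
  | nil => rfl
  | cons c l ih => simp [ih]

lemma lst_mem (a : V) (l : List V) : lst a l ∈ a :: l := by
  induction l generalizing a with
  | nil => simp
  | cons c l ih => exact List.mem_cons_of_mem a (ih c)

lemma lst_mem' (a : V) (l : List V) (h : l ≠ []) : lst a l ∈ l := by
  cases l with
  | nil => exact absurd rfl h
  | cons c l => simpa using lst_mem c l

lemma chain_cons' {R : V → V → Prop} {a b : V} {l : List V} :
    List.Chain R a (b :: l) ↔ R a b ∧ List.Chain R b l := by
  unfold List.Chain; exact List.isChain_cons_cons

lemma chain_singleton' {R : V → V → Prop} {a b : V} :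
    List.Chain R a [b] ↔ R a b := by
  unfold List.Chain; exact List.isChain_pair

lemma chain_split' {R : V → V → Prop} {a b : V} {l₁ l₂ : List V} :
    List.Chain R a (l₁ ++ b :: l₂) ↔ List.Chain R a (l₁ ++ [b]) ∧ List.Chain R b l₂ := by
  unfold List.Chain; exact List.isChain_cons_split

lemma chain_concat_iff {R : V → V → Prop} : ∀ {a : V} (l : List V) {b : V},
    List.Chain R a (l ++ [b]) ↔ List.Chain R a l ∧ R (lst a l) b := by
  intro a l
  induction l generalizing a with
  | nil => simp [chain_singleton', List.Chain.nil]
  | cons c l ih =>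
    intro b
    simp only [List.cons_append, chain_cons', ih, lst_cons, and_assoc]

variable {G : SimpleGraph V}

/-- A cyclic list: `a :: l` lists the vertices of a cycle in order. -/
def IsCyc (G : SimpleGraph V) (a : V) (l : List V) : Prop :=
  List.Chain G.Adj a (l ++ [a]) ∧ (a :: l).Nodup ∧ 2 ≤ l.length

lemma rotate_perm (a w : V) (p q : List V) :
    (w :: (q ++ a :: p)).Perm (a :: (p ++ w :: q)) := by
  calc w :: (q ++ a :: p) ~ w :: a :: (q ++ p) := List.Perm.cons w (List.perm_middle)
    _ ~ a :: w :: (q ++ p) := List.Perm.swap _ _ _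
    _ ~ a :: w :: (p ++ q) := List.Perm.cons _ (List.Perm.cons _ (List.perm_append_comm))
    _ ~ a :: (p ++ w :: q) := List.Perm.cons _ List.perm_middle.symm

lemma IsCyc.rotate {a w : V} {p q : List V} (h : IsCyc G a (p ++ w :: q)) :
    IsCyc G w (q ++ a :: p) := by
  obtain ⟨hc, hn, hl⟩ := h
  have hsplit : List.Chain G.Adj a (p ++ w :: (q ++ [a])) := by simpa using hc
  rw [chain_split'] at hsplit
  refine ⟨?_, ?_, ?_⟩
  · rw [show q ++ a :: p ++ [w] = q ++ a :: (p ++ [w]) by simp, chain_split']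
    exact ⟨hsplit.2, hsplit.1⟩
  · exact (rotate_perm a w p q).symm.nodup hn
  · simp at hl ⊢; omega

lemma exists_walk_of_chain : ∀ (a : V) (l : List V) (b : V),
    List.Chain G.Adj a (l ++ [b]) → ∃ p : G.Walk a b, p.support = a :: (l ++ [b])
  | a, [], b, h => by
    rw [List.nil_append, chain_singleton'] at h
    exact ⟨SimpleGraph.Walk.cons h SimpleGraph.Walk.nil, by simp⟩
  | a, c :: l, b, h => by
    rw [List.cons_append, chain_cons'] at h
    obtain ⟨p, hp⟩ := exists_walk_of_chain c l b h.2
    exact ⟨SimpleGraph.Walk.cons h.1 p, by simp [hp]⟩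

/-- a closed edge `s(b,a)` in a walk from `a` to `b` with distinct vertices
forces length 1 -/
lemma eq_len_one {a b : V} (q : G.Walk a b) (hn : q.support.Nodup)
    (he : s(b, a) ∈ q.edges) : q.length = 1 := by
  cases q with
  | nil => simp at he
  | cons h p =>
    rename_i c
    rw [SimpleGraph.Walk.edges_cons, List.mem_cons] at he
    rw [SimpleGraph.Walk.support_cons, List.nodup_cons] at hn
    rcases he with he | he
    · rw [Sym2.eq_iff] at he
      rcases he with ⟨rfl, rfl⟩ | ⟨h1, -⟩
      · exact absurd p.end_mem_support hn.1
      · subst h1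
        cases p with
        | nil => simp
        | cons h' p' =>
          have : b ∉ p'.support := by
            have := hn.2
            rw [SimpleGraph.Walk.support_cons, List.nodup_cons] at this
            exact this.1
          exact absurd p'.end_mem_support this
    · exact absurd (SimpleGraph.Walk.snd_mem_support_of_mem_edges p he) hn.1

lemma isCyc_hamCycle [DecidableEq V] {a : V} {l : List V} (h : IsCyc G a l)
    (hcov : ∀ v, v ∈ a :: l) : ∃ p : G.Walk a a, p.IsHamiltonianCycle := by
  obtain ⟨hc, hn, hl⟩ := h
  obtain ⟨c, t, rfl⟩ : ∃ c t, l = c :: t := by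
    cases l with
    | nil => simp at hl
    | cons c t => exact ⟨c, t, rfl⟩
  rw [List.cons_append, chain_cons'] at hc
  obtain ⟨hac, hc⟩ := hc
  obtain ⟨q, hq⟩ := exists_walk_of_chain c t a hc
  have hqn : q.support.Nodup := by
    rw [hq]
    have : (c :: (t ++ [a])).Perm (a :: c :: t) := by
      calc c :: (t ++ [a]) ~ a :: (c :: t) := by
            simpa using (List.perm_middle (a := a) (l₁ := c :: t) (l₂ := []))
      _ ~ a :: c :: t := by rfl
    exact this.symm.nodup hn
  have hlen : q.length = t.length + 1 := by
    have := SimpleGraph.Walk.length_support q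
    rw [hq] at this
    simp at this
    omega
  have ht1 : 1 ≤ t.length := by simpa using hl
  refine ⟨SimpleGraph.Walk.cons hac q, ?_⟩
  rw [SimpleGraph.Walk.isHamiltonianCycle_iff_isCycle_and_support_count_tail_eq_one]
  constructor
  · rw [SimpleGraph.Walk.cons_isCycle_iff]
    refine ⟨(SimpleGraph.Walk.isPath_def q).2 hqn, fun he => ?_⟩
    have := eq_len_one q hqn he
    omega
  · intro v
    have hsup : (SimpleGraph.Walk.cons hac q).support.tail = (c :: t) ++ [a] := by
      simp [hq]
    rw [hsup, List.count_append]
    rcases List.mem_cons.1 (hcov v) with rfl | hv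
    · rw [List.count_eq_zero.2 (by exact (List.nodup_cons.1 hn).1), List.count_singleton]
      simp
    · rw [List.count_eq_one_of_mem (List.nodup_cons.1 hn).2 hv]
      have : v ≠ a := fun h => (List.nodup_cons.1 hn).1 (h ▸ hv)
      simp [List.count_eq_zero, this]

lemma IsCyc.insHead {a x c : V} {t : List V} (h : IsCyc G a (c :: t))
    (hax : G.Adj a x) (hxc : G.Adj x c) (hx : x ∉ a :: c :: t) :
    IsCyc G a (x :: c :: t) := by
  obtain ⟨hc, hn, hl⟩ := h
  rw [List.cons_append, chain_cons'] at hc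
  refine ⟨?_, ?_, by simp⟩
  · rw [List.cons_append, chain_cons']
    exact ⟨hax, by rw [List.cons_append, chain_cons']; exact ⟨hxc, hc.2⟩⟩
  · simp only [List.mem_cons, not_or] at hx
    simp only [List.nodup_cons, List.mem_cons, not_or] at hn ⊢
    exact ⟨⟨Ne.symm hx.1, hn.1.1, hn.1.2⟩, ⟨hx.2.1, hx.2.2⟩, hn.2⟩

lemma IsCyc.insHead2 {a x w c : V} {t : List V} (h : IsCyc G a (c :: t))
    (hax : G.Adj a x) (hxw : G.Adj x w) (hwc : G.Adj w c)
    (hx : x ∉ a :: c :: t) (hw : w ∉ a :: c :: t) :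
    IsCyc G a (x :: w :: c :: t) := by
  obtain ⟨hc, hn, hl⟩ := h
  rw [List.cons_append, chain_cons'] at hc
  refine ⟨?_, ?_, by simp⟩
  · simp only [List.cons_append, chain_cons']
    exact ⟨hax, hxw, hwc, hc.2⟩
  · simp only [List.mem_cons, not_or] at hx hw
    simp only [List.nodup_cons, List.mem_cons, not_or] at hn ⊢
    exact ⟨⟨Ne.symm hx.1, Ne.symm hw.1, hn.1.1, hn.1.2⟩,
      ⟨hxw.ne, hx.2.1, hx.2.2⟩, ⟨hw.2.1, hw.2.2⟩, hn.2⟩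

lemma IsCyc.insLast {a x : V} {l : List V} (h : IsCyc G a l)
    (hlx : G.Adj (lst a l) x) (hxa : G.Adj x a) (hx : x ∉ a :: l) :
    IsCyc G a (l ++ [x]) := by
  obtain ⟨hc, hn, hl⟩ := h
  rw [chain_concat_iff] at hc
  refine ⟨?_, ?_, by simp; omega⟩
  · rw [chain_concat_iff, chain_concat_iff, lst_append]
    exact ⟨⟨hc.1, hlx⟩, by simpa using hxa⟩
  · have hperm : (a :: (l ++ [x])).Perm (x :: a :: l) := by
      simpa using (List.perm_middle (a := x) (l₁ := a :: l) (l₂ := []))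
    exact hperm.nodup_iff.2 (List.nodup_cons.2 ⟨hx, hn⟩)


section Conn
variable [Fintype V] [DecidableEq V]

/-- inclusion hom from an induced subgraph -/
def inclHom (G : SimpleGraph V) (s : Set V) : G.induce s →g G :=
  ⟨Subtype.val, fun h => h⟩

lemma exists_third (h3 : 3 ≤ Fintype.card V) (a b : V) : ∃ c : V, c ≠ a ∧ c ≠ b := by
  by_contra hcon
  push_neg at hcon
  have hsub : (Finset.univ : Finset V) ⊆ {a, b} := by
    intro c _
    simp only [Finset.mem_insert, Finset.mem_singleton]
    rcases eq_or_ne c a with h' | h'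
    · exact Or.inl h'
    · exact Or.inr (hcon c h')
  have hle := Finset.card_le_card hsub
  rw [Finset.card_univ] at hle
  have : ({a, b} : Finset V).card ≤ 2 := (Finset.card_insert_le _ _).trans (by simp)
  omega

lemma TwoConnected.connected (h : TwoConnected G) : G.Connected := by
  obtain ⟨h3, hdel⟩ := h
  have : Nonempty V := Fintype.card_pos_iff.1 (by omega)
  refine ⟨fun u v => ?_⟩
  obtain ⟨z, hzu, hzv⟩ := exists_third h3 u v
  have hconn := hdel z
  have hr := hconn.preconnected ⟨u, Ne.symm hzu⟩ ⟨v, Ne.symm hzv⟩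
  exact hr.map (inclHom G _)

lemma isolated_reach {W : Type*} {H : SimpleGraph W} {u v : W}
    (h : ∀ y, ¬H.Adj u y) (w : H.Walk u v) : u = v := by
  cases w with
  | nil => rfl
  | cons h' p => exact absurd h' (h _)

lemma two_neighbors (h2 : TwoConnected G) (a : V) :
    ∃ b c, G.Adj a b ∧ G.Adj a c ∧ b ≠ c := by
  by_contra hcon
  push_neg at hcon
  by_cases hex : ∃ b, G.Adj a b
  · obtain ⟨b, hb⟩ := hex
    obtain ⟨c, hca, hcb⟩ := exists_third h2.1 a b
    have hab : a ≠ b := hb.ne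
    obtain ⟨w⟩ := (h2.2 b).preconnected ⟨a, hab⟩ ⟨c, hcb⟩
    have : (⟨a, hab⟩ : {w : V // w ≠ b}) = ⟨c, hcb⟩ := by
      refine isolated_reach (fun y hy => ?_) w
      have : G.Adj a y.val := hy
      exact y.2 (hcon b y.val hb this).symm
    exact hca (congrArg Subtype.val this).symm
  · push_neg at hex
    obtain ⟨z, hza, -⟩ := exists_third h2.1 a a
    obtain ⟨c, hca, hcz⟩ := exists_third h2.1 a z
    have haz : a ≠ z := Ne.symm hza
    obtain ⟨w⟩ := (h2.2 z).preconnected ⟨a, haz⟩ ⟨c, hcz⟩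
    have : (⟨a, haz⟩ : {w : V // w ≠ z}) = ⟨c, hcz⟩ := by
      refine isolated_reach (fun y hy => ?_) w
      exact hex y.val hy
    exact hca (congrArg Subtype.val this).symm

lemma cross_edge {S : Set V} : ∀ {a y : V} (w : G.Walk a y), a ∈ S → y ∉ S →
    ∃ u x, u ∈ S ∧ x ∉ S ∧ G.Adj u x := by
  intro a y w
  induction w with
  | nil => intro h h'; exact absurd h h'
  | @cons u m y h p ih =>
    intro ha hy
    by_cases hm : m ∈ S
    · exact ih hm hy
    · exact ⟨u, m, ha, hm, h⟩

variable [DecidableRel G.Adj]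

lemma dist_two (hconn : G.Connected) {x a b : V} (hxa : G.Adj x a) (hab : G.Adj a b)
    (hne : x ≠ b) (hnadj : ¬G.Adj x b) : G.dist x b = 2 := by
  have hle : G.dist x b ≤ 2 := by
    have := SimpleGraph.dist_le
      (SimpleGraph.Walk.cons hxa (SimpleGraph.Walk.cons hab SimpleGraph.Walk.nil))
    simpa using this
  have h0 : G.dist x b ≠ 0 := fun hh => hne (hconn.dist_eq_zero_iff.1 hh)
  have h1 : G.dist x b ≠ 1 := fun hh => hnadj (SimpleGraph.dist_eq_one_iff_adj.1 hh)
  omega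

lemma init_cyc (h2 : TwoConnected G)
    (hShi : ∀ u v : V, G.dist u v = 2 →
      2 ≤ (G.neighborFinset u ∩ G.neighborFinset v).card) :
    ∃ a l, IsCyc G a l := by
  have hne : Nonempty V := Fintype.card_pos_iff.1 (by have := h2.1; omega)
  obtain ⟨a⟩ := hne
  obtain ⟨b, c, hab, hac, hbc⟩ := two_neighbors h2 a
  by_cases hbcadj : G.Adj b c
  · refine ⟨a, [b, c], ?_, ?_, by simp⟩
    · simp only [List.cons_append, List.nil_append, chain_cons', chain_singleton']
      exact ⟨hab, hbcadj, hac.symm, List.Chain.nil⟩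
    · simp only [List.nodup_cons, List.mem_cons, List.mem_singleton, List.not_mem_nil,
        not_or, List.nodup_nil, and_true, not_false_iff]
      exact ⟨⟨hab.ne, hac.ne⟩, hbc⟩
  · have hdist : G.dist b c = 2 := dist_two (TwoConnected.connected h2) hab.symm hac hbc hbcadj
    have hcard := hShi b c hdist
    have hamem : a ∈ G.neighborFinset b ∩ G.neighborFinset c := by
      rw [Finset.mem_inter, SimpleGraph.mem_neighborFinset, SimpleGraph.mem_neighborFinset]
      exact ⟨hab.symm, hac.symm⟩
    obtain ⟨w, hwmem, hwa⟩ := Finset.exists_mem_ne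
      (s := G.neighborFinset b ∩ G.neighborFinset c) (by omega) a
    rw [Finset.mem_inter, SimpleGraph.mem_neighborFinset, SimpleGraph.mem_neighborFinset] at hwmem
    obtain ⟨hbw, hcw⟩ := hwmem
    refine ⟨a, [b, w, c], ?_, ?_, by simp⟩
    · simp only [List.cons_append, List.nil_append, chain_cons', chain_singleton']
      exact ⟨hab, hbw, hcw.symm, hac.symm, List.Chain.nil⟩
    · simp only [List.nodup_cons, List.mem_cons, not_or, List.mem_singleton,
        List.not_mem_nil, not_false_iff, List.nodup_nil, and_true]
      exact ⟨⟨hab.ne, Ne.symm hwa, hac.ne⟩, ⟨hbw.ne, hbc⟩, fun hh => hcw.ne hh.symm⟩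

lemma extend_cyc (hconn : G.Connected)
    (hclaw : ∀ c a b d : V, ¬IsInducedClaw G c a b d)
    (hShi : ∀ u v : V, G.dist u v = 2 →
      2 ≤ (G.neighborFinset u ∩ G.neighborFinset v).card)
    {a x : V} {l : List V} (h : IsCyc G a l) (hax : G.Adj a x) (hx : x ∉ a :: l) :
    ∃ a' l', IsCyc G a' l' ∧ l.length < l'.length := by
  obtain ⟨b, t, rfl⟩ : ∃ b t, l = b :: t := by
    obtain ⟨hc, hn, hl⟩ := h
    cases l with
    | nil => simp at hl
    | cons b t => exact ⟨b, t, rfl⟩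
  have hab : G.Adj a b := by
    have := h.1
    rw [List.cons_append, chain_cons'] at this
    exact this.1
  by_cases hxb : G.Adj x b
  · exact ⟨a, x :: b :: t, h.insHead hax hxb hx, by simp⟩
  have hxbne : x ≠ b := fun hh => hx (hh ▸ List.mem_cons_of_mem _ List.mem_cons_self)
  have hdist : G.dist x b = 2 := dist_two hconn hax.symm hab hxbne hxb
  have hcard := hShi x b hdist
  have hamem : a ∈ G.neighborFinset x ∩ G.neighborFinset b := by
    rw [Finset.mem_inter, SimpleGraph.mem_neighborFinset, SimpleGraph.mem_neighborFinset]
    exact ⟨hax.symm, hab.symm⟩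
  obtain ⟨w, hwmem, hwa⟩ := Finset.exists_mem_ne
    (s := G.neighborFinset x ∩ G.neighborFinset b) (by omega) a
  rw [Finset.mem_inter, SimpleGraph.mem_neighborFinset, SimpleGraph.mem_neighborFinset] at hwmem
  obtain ⟨hxw, hbw⟩ := hwmem
  by_cases hwC : w ∈ a :: b :: t
  swap
  · exact ⟨a, x :: w :: b :: t, h.insHead2 hax hxw hbw.symm hx hwC, by simp⟩
  have hwt : w ∈ t := by
    rcases List.mem_cons.1 hwC with h' | h'
    · exact absurd h' hwa
    rcases List.mem_cons.1 h' with h'' | h''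
    · exact absurd h''.symm hbw.ne
    · exact h''
  obtain ⟨A, B, rfl⟩ := List.append_of_mem hwt
  have hrot : IsCyc G w (B ++ a :: b :: A) := by
    have h' : IsCyc G a ((b :: A) ++ w :: B) := by simpa using h
    exact h'.rotate
  have hxrot : x ∉ w :: (B ++ a :: b :: A) := by
    intro hm
    exact hx (by simpa using ((rotate_perm a w (b :: A) B).mem_iff.1 (by simpa using hm)))
  cases B with
  | nil =>
    refine ⟨w, x :: a :: b :: A, ?_, by simp⟩
    exact (show IsCyc G w (a :: b :: A) by simpa using hrot).insHead
      hxw.symm hax.symm (by simpa using hxrot)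
  | cons c B' =>
    by_cases hxc : G.Adj x c
    · refine ⟨w, x :: c :: (B' ++ a :: b :: A), ?_,
        by simp only [List.length_cons, List.length_append]; omega⟩
      exact (show IsCyc G w (c :: (B' ++ a :: b :: A)) by simpa using hrot).insHead
        hxw.symm hxc (by simpa using hxrot)
    -- get the chain pieces of the original cycle
    have hchain : List.Chain G.Adj a (b :: (A ++ (w :: (c :: (B' ++ [a]))))) := by
      simpa using h.1
    rw [chain_cons'] at hchain
    obtain ⟨-, hchain⟩ := hchain
    rw [chain_split'] at hchain
    obtain ⟨hchAw, hchain⟩ := hchain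
    rw [chain_concat_iff] at hchAw
    obtain ⟨hchA, hzw⟩ := hchAw
    rw [chain_cons'] at hchain
    obtain ⟨hwc, hchB⟩ := hchain
    -- hchA : Chain b A, hzw : Adj (lst b A) w, hwc : Adj w c, hchB : Chain c (B' ++ [a])
    set z := lst b A with hzdef
    by_cases hxz : G.Adj x z
    · refine ⟨w, (c :: B' ++ a :: b :: A) ++ [x], ?_,
        by simp only [List.length_cons, List.length_append]; omega⟩
      refine (show IsCyc G w (c :: B' ++ a :: b :: A) by simpa using hrot).insLast ?_ hxw
        (by simpa using hxrot)
      have : lst w (c :: B' ++ a :: b :: A) = z := by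
        rw [show c :: B' ++ a :: b :: A = (c :: B') ++ ((a :: [b]) ++ A) by simp,
          lst_append, lst_append]
        simp [hzdef]
      rw [this]
      exact hxz.symm
    · -- the claw at w forces Adj z c, giving the surgery cycle
      have hzmem : z ∈ b :: A := lst_mem b A
      have hxzne : x ≠ z := by
        intro hh
        exact hx (by
          rw [hh]
          rcases List.mem_cons.1 hzmem with h' | h'
          · exact h' ▸ List.mem_cons_of_mem _ List.mem_cons_self
          · exact List.mem_cons_of_mem _ (List.mem_cons_of_mem _ (by simp [h'])))
      have hxcne : x ≠ c := by
        intro hh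
        exact hx (by rw [hh]; simp)
      have hczne : c ≠ z := by
        intro hh
        have hnd : ((b :: A) ++ (w :: c :: B')).Nodup := by
          have := h.2.1
          rw [List.nodup_cons] at this
          simpa using this.2
        exact (List.disjoint_of_nodup_append hnd) (hh ▸ hzmem) (by simp)
      have hzw' : G.Adj w z := hzw.symm
      have hcz : G.Adj c z := by
        by_contra hcz
        exact hclaw w x c z ⟨hxcne, hxzne, hczne, hxw.symm, hwc, hzw', hxc, hxz, hcz⟩
      refine ⟨a, x :: w :: b :: (A ++ c :: B'), ⟨?_, ?_, by simp⟩,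
        by simp only [List.length_cons, List.length_append]; omega⟩
      · have hgoal : List.Chain G.Adj a (x :: (w :: (b :: (A ++ (c :: (B' ++ [a])))))) := by
          rw [chain_cons']
          refine ⟨hax, ?_⟩
          rw [chain_cons']
          refine ⟨hxw, ?_⟩
          rw [chain_cons']
          refine ⟨hbw.symm, ?_⟩
          rw [chain_split']
          refine ⟨?_, hchB⟩
          rw [chain_concat_iff]
          exact ⟨hchA, hcz.symm⟩
        simpa using hgoal
      · have hperm : (a :: x :: w :: b :: (A ++ c :: B')).Perm
            (x :: a :: b :: (A ++ w :: c :: B')) := by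
          calc a :: x :: (w :: b :: (A ++ c :: B'))
              ~ x :: a :: (w :: b :: (A ++ c :: B')) := List.Perm.swap _ _ _
            _ ~ x :: a :: (b :: (A ++ w :: c :: B')) :=
              List.Perm.cons _ (List.Perm.cons _ (by
                simpa using (List.perm_middle (a := w) (l₁ := b :: A) (l₂ := c :: B')).symm))
        refine hperm.nodup_iff.2 (List.nodup_cons.2 ⟨?_, h.2.1⟩)
        simpa using hx

lemma grow_cyc (hconn : G.Connected)
    (hclaw : ∀ c a b d : V, ¬IsInducedClaw G c a b d)
    (hShi : ∀ u v : V, G.dist u v = 2 →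
      2 ≤ (G.neighborFinset u ∩ G.neighborFinset v).card) :
    ∀ (k : ℕ) (a : V) (l : List V), IsCyc G a l → Fintype.card V ≤ l.length + 1 + k →
      ∃ a' l', IsCyc G a' l' ∧ ∀ v, v ∈ a' :: l' := by
  intro k
  induction k with
  | zero =>
    intro a l hcyc hcard
    refine ⟨a, l, hcyc, fun v => ?_⟩
    have hlen : (a :: l).toFinset.card = l.length + 1 := by
      rw [List.toFinset_card_of_nodup hcyc.2.1]
      simp
    have hle := Finset.card_le_univ (a :: l).toFinset
    have : (a :: l).toFinset = Finset.univ := by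
      apply Finset.eq_univ_of_card
      omega
    rw [← List.mem_toFinset, this]
    exact Finset.mem_univ v
  | succ k ih =>
    intro a l hcyc hcard
    by_cases hcov : ∀ v, v ∈ a :: l
    · exact ⟨a, l, hcyc, hcov⟩
    · push_neg at hcov
      obtain ⟨y, hy⟩ := hcov
      obtain ⟨w0⟩ := hconn.preconnected a y
      obtain ⟨u, x, huS, hxS, hux⟩ :=
        cross_edge (S := {v | v ∈ a :: l}) w0 (by simp) hy
      have hmain : ∃ a' l', IsCyc G a' l' ∧ l.length < l'.length := by
        rcases List.mem_cons.1 huS with rfl | hul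
        · exact extend_cyc hconn hclaw hShi hcyc hux hxS
        · obtain ⟨p, q, rfl⟩ := List.append_of_mem hul
          have hrot : IsCyc G u (q ++ a :: p) := hcyc.rotate
          have hxrot : x ∉ u :: (q ++ a :: p) := by
            intro hm
            exact hxS ((rotate_perm a u p q).mem_iff.1 hm)
          obtain ⟨a', l', hcyc', hlen'⟩ := extend_cyc hconn hclaw hShi hrot hux hxrot
          refine ⟨a', l', hcyc', ?_⟩
          have : (q ++ a :: p).length = (p ++ u :: q).length := by simp; omega
          omega
      obtain ⟨a', l', hcyc', hlen'⟩ := hmain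
      exact ih a' l' hcyc' (by omega)

end Conn

end ShiProof

/-- **Shi's theorem.** A 2-connected claw-free graph in which every pair of
vertices at distance 2 has at least two common neighbors is Hamiltonian. -/
theorem shi_hamiltonian {V : Type*} [Fintype V] [DecidableEq V]
    (G : SimpleGraph V) [DecidableRel G.Adj]
    (h2 : TwoConnected G)
    (hclaw : ∀ c a b d : V, ¬IsInducedClaw G c a b d)
    (hShi : ∀ u v : V, G.dist u v = 2 →
      2 ≤ (G.neighborFinset u ∩ G.neighborFinset v).card) :
    G.IsHamiltonian := by
  intro _
  have hconn : G.Connected := ShiProof.TwoConnected.connected h2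
  obtain ⟨a, l, hcyc⟩ := ShiProof.init_cyc h2 hShi
  obtain ⟨a', l', hcyc', hcov⟩ := ShiProof.grow_cyc hconn hclaw hShi
    (Fintype.card V) a l hcyc (by omega)
  obtain ⟨p, hp⟩ := ShiProof.isCyc_hamCycle hcyc' hcov
  exact ⟨a', p, hp⟩
end

section
/- Let G be a graph on n vertices. Define the Ore-edge set Ẽ(G) = {xy : xy ∈ E(G), or deg(x) + deg(y) ≥ n with x ≠ y}. If C' = v_1 v_2 ... v_k v_1 is a sequence of vertices with v_i v_{i+1} ∈ Ẽ(G) for all i (indices mod k), then there exists an actual cycle C of G with V(C') ⊆ V(C). -/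
open SimpleGraph

/-- `{x, y}` is an Ore-edge of `G`: either an actual edge, or a pair of distinct
vertices with degree sum at least `n`. -/
def OreEdge {V : Type*} [Fintype V] (G : SimpleGraph V) [DecidableRel G.Adj]
    (x y : V) : Prop :=
  x ≠ y ∧ (G.Adj x y ∨ Fintype.card V ≤ G.degree x + G.degree y)

section OreAux

open SimpleGraph List

open SimpleGraph List

variable {V : Type*} (G : SimpleGraph V) [DecidableRel G.Adj]

/-- number of consecutive non-adjacent pairs ("virtual edges") in a list -/
def vcnt : List V → ℕ
  | [] => 0
  | [_] => 0
  | a :: b :: t => (if G.Adj a b then 0 else 1) + vcnt (b :: t)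

variable {G}

lemma vcnt_cons_cons (a b : V) (t : List V) :
    vcnt G (a :: b :: t) = (if G.Adj a b then 0 else 1) + vcnt G (b :: t) := rfl

lemma vcnt_append_cons (A : List V) (a : V) (B : List V) :
    vcnt G (A ++ a :: B) = vcnt G (A ++ [a]) + vcnt G (a :: B) := by
  induction A with
  | nil =>
    cases B with
    | nil => simp [vcnt]
    | cons b B => simp [vcnt_cons_cons, vcnt]
  | cons x A ih =>
    cases A with
    | nil =>
      rw [List.singleton_append, List.singleton_append, vcnt_cons_cons, vcnt_cons_cons]
      have : vcnt G [a] = 0 := rfl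
      omega
    | cons y A' =>
      simp only [List.cons_append, vcnt_cons_cons] at ih ⊢
      omega

lemma vcnt_le_append_singleton (A : List V) (b : V) :
    vcnt G A ≤ vcnt G (A ++ [b]) := by
  induction A with
  | nil => simp [vcnt]
  | cons x A ih =>
    cases A with
    | nil => simp [vcnt]
    | cons y A' =>
      simp only [List.cons_append, vcnt_cons_cons] at ih ⊢
      omega

lemma vcnt_pair (a b : V) : vcnt G [a, b] = if G.Adj a b then 0 else 1 := by
  simp [vcnt_cons_cons, vcnt]

lemma vcnt_reverse (l : List V) : vcnt G l.reverse = vcnt G l := by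
  induction l with
  | nil => rfl
  | cons a t ih =>
    cases t with
    | nil => rfl
    | cons b t' =>
      have h2 : (b :: t').reverse = t'.reverse ++ [b] := by simp
      have h1 : (a :: b :: t').reverse = t'.reverse ++ b :: [a] := by simp
      rw [h1, vcnt_append_cons, ← h2, ih]
      simp only [vcnt_cons_cons]
      have hab : (if G.Adj b a then 0 else 1) = (if G.Adj a b then 0 else 1) := by
        simp only [G.adj_comm b a]
      have : vcnt G [a] = 0 := rfl
      omega

lemma vcnt_eq_zero_iff (l : List V) : vcnt G l = 0 ↔ List.Chain' G.Adj l := by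
  induction l with
  | nil => simp [vcnt, List.Chain']
  | cons a t ih =>
    cases t with
    | nil => simp [vcnt, List.Chain']
    | cons b t' =>
      unfold List.Chain' at ih ⊢
      rw [List.isChain_cons_cons, ← ih, vcnt_cons_cons]
      by_cases h : G.Adj a b <;> simp [h]

lemma exists_virtual_of_vcnt_pos {l : List V} (h : vcnt G l ≠ 0) :
    ∃ i, ∃ h : i + 1 < l.length, ¬ G.Adj l[i] l[i+1] := by
  by_contra hc
  push_neg at hc
  apply h
  rw [vcnt_eq_zero_iff, List.Chain', List.isChain_iff_getElem]
  intro i hi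
  have h1 : i + 1 < l.length := by omega
  have := hc i h1
  exact this


variable {V : Type*} [Fintype V] [DecidableEq V] {G : SimpleGraph V} [DecidableRel G.Adj]

variable {V : Type*} {G : SimpleGraph V}

lemma exists_walk_of_chain' :
    ∀ (l : List V) (u v : V), List.Chain' G.Adj (u :: (l ++ [v])) →
      ∃ w : G.Walk u v, w.support = u :: (l ++ [v]) := by
  intro l
  induction l with
  | nil =>
    intro u v h
    rw [List.nil_append, List.Chain', List.isChain_pair] at h
    exact ⟨Walk.cons h Walk.nil, by simp⟩
  | cons a l ih =>
    intro u v h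
    rw [List.cons_append, List.Chain', List.isChain_cons_cons] at h
    obtain ⟨w, hw⟩ := ih a v h.2
    exact ⟨Walk.cons h.1 w, by simp [hw]⟩

lemma exists_cycle_of_adj_chain (L : List V) (hnd : L.Nodup) (hlen : 3 ≤ L.length)
    (hch : List.Chain' G.Adj (L ++ L.take 1)) :
    ∃ (u : V) (C : G.Walk u u), C.IsCycle ∧ ∀ v ∈ L, v ∈ C.support := by
  match L, hlen with
  | v0 :: v1 :: v2 :: rest, _ =>
    simp only [List.take, List.cons_append] at hch
    rw [List.Chain', List.isChain_cons_cons, List.isChain_cons_cons] at hch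
    obtain ⟨h01, h12, hch2⟩ := hch
    obtain ⟨q, hq⟩ := exists_walk_of_chain' (rest) v2 v0 hch2
    have hnd' := hnd
    simp only [List.nodup_cons, List.mem_cons] at hnd'
    -- nodup facts
    have hv01 : v0 ≠ v1 := fun h => hnd'.1 (Or.inl h)
    have hv02 : v0 ≠ v2 := fun h => hnd'.1 (Or.inr (Or.inl h))
    have hv0r : v0 ∉ rest := fun h => hnd'.1 (Or.inr (Or.inr h))
    have hv12 : v1 ≠ v2 := fun h => hnd'.2.1 (Or.inl h)
    have hv1r : v1 ∉ rest := fun h => hnd'.2.1 (Or.inr h)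
    set p : G.Walk v1 v0 := Walk.cons h12 q with hp
    have hps : p.support = v1 :: v2 :: (rest ++ [v0]) := by simp [hp, hq]
    have hpath : p.IsPath := by
      rw [Walk.isPath_def, hps]
      have hperm : (v1 :: v2 :: (rest ++ [v0])).Perm (v0 :: v1 :: v2 :: rest) := by
        simpa using List.perm_append_singleton v0 (v1 :: v2 :: rest)
      exact hperm.nodup_iff.mpr hnd
    have hedge : s(v0, v1) ∉ p.edges := by
      rw [hp]
      simp only [Walk.edges_cons, List.mem_cons]
      rintro (h | h)
      · rw [Sym2.eq_iff] at h
        rcases h with ⟨h1, h2⟩ | ⟨h1, h2⟩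
        · exact hv12 h2
        · exact hv02 h1
      · have : v1 ∈ q.support := by
          have := Walk.snd_mem_support_of_mem_edges q h
          exact this
        rw [hq] at this
        simp only [List.mem_cons, List.mem_append, List.mem_singleton] at this
        rcases this with h | h | h <;> simp_all
    refine ⟨v0, Walk.cons h01 p, ?_, ?_⟩
    · rw [Walk.cons_isCycle_iff]
      exact ⟨hpath, hedge⟩
    · intro v hv
      simp only [Walk.support_cons, hps, List.mem_cons, List.mem_append, List.mem_singleton]
      simp only [List.mem_cons] at hv
      tauto


variable {V : Type*} [Fintype V] [DecidableEq V] {G : SimpleGraph V} [DecidableRel G.Adj]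

/-- close up a list cyclically -/
def cyc (L : List V) : List V := L ++ L.take 1

lemma ore_symm {x y : V} (h : OreEdge G x y) : OreEdge G y x :=
  ⟨h.1.symm, h.2.elim (fun h => Or.inl h.symm) (fun h => Or.inr (by omega))⟩

lemma ore_of_adj {x y : V} (h : G.Adj x y) : OreEdge G x y := ⟨G.ne_of_adj h, Or.inl h⟩

lemma exists_rotation (i : ℕ) : ∀ (L : List V), L.Nodup → 3 ≤ L.length →
    List.Chain' (OreEdge G) (cyc L) → ∀ (hi : i + 1 < (cyc L).length),
    ¬ G.Adj ((cyc L)[i]'(by omega)) ((cyc L)[i+1]'hi) →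
    ∃ L₂ : List V, L₂.Perm L ∧ List.Chain' (OreEdge G) (cyc L₂) ∧
      vcnt G (cyc L₂) = vcnt G (cyc L) ∧
      ∀ p q, L₂.getLast? = some p → L₂.head? = some q → ¬ G.Adj p q := by
  induction i with
  | zero =>
    intro L hnd hlen hch hi hvirt
    match L, hlen with
    | a :: b :: t', _ =>
      set R : List V := (b :: t') ++ [a] with hR
      have hcycL : cyc (a :: b :: t') = a :: R := by simp [cyc, hR]
      have hcycR : cyc R = R ++ [b] := by simp [cyc, hR]
      refine ⟨R, by simpa [hR] using List.perm_append_singleton a (b :: t'), ?_, ?_, ?_⟩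
      · rw [hcycR]
        rw [hcycL, List.Chain', List.isChain_cons] at hch
        refine List.IsChain.append hch.2 (List.isChain_singleton b) ?_
        intro p hp q hq
        rw [hR, List.getLast?_concat] at hp
        simp at hp hq
        subst hp; subst hq
        exact hch.1 b (by simp [hR])
      · have e1 : cyc R = (b :: t') ++ (a :: [b]) := by rw [hcycR, hR]; simp
        have e2 : cyc (a :: b :: t') = a :: b :: (t' ++ [a]) := by rw [hcycL, hR]; simp
        rw [e1, vcnt_append_cons, vcnt_pair, e2, vcnt_cons_cons]
        simp only [List.cons_append]
        omega
      · intro p q hp hq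
        rw [hR, List.getLast?_concat] at hp
        rw [hR] at hq
        simp at hp hq
        subst hp; subst hq
        have h0 : (cyc (a :: b :: t'))[0]'(by omega) = a := by simp [hcycL]
        have h1 : (cyc (a :: b :: t'))[1]'hi = b := by simp [hcycL, hR]
        intro hab
        exact hvirt (by rw [h0, h1]; exact hab)
  | succ i ih =>
    intro L hnd hlen hch hi hvirt
    match L, hlen with
    | a :: b :: t', hlen3 =>
      have ht' : 1 ≤ t'.length := by simp only [List.length_cons] at hlen3; omega
      set R : List V := (b :: t') ++ [a] with hR
      have hcycL : cyc (a :: b :: t') = a :: R := by simp [cyc, hR]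
      have hcycR : cyc R = R ++ [b] := by simp [cyc, hR]
      have hlenR : R.length = t'.length + 2 := by rw [hR]; simp
      have hlencycL : (cyc (a :: b :: t')).length = t'.length + 3 := by
        rw [hcycL]; simp [hlenR]
      have hlencycR : (cyc R).length = t'.length + 3 := by rw [hcycR]; simp [hlenR]
      have hRperm : R.Perm (a :: b :: t') := by
        simpa [hR] using List.perm_append_singleton a (b :: t')
      have hchR : List.Chain' (OreEdge G) (cyc R) := by
        rw [hcycR]
        rw [hcycL, List.Chain', List.isChain_cons] at hch
        refine List.IsChain.append hch.2 (List.isChain_singleton b) ?_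
        intro p hp q hq
        rw [hR, List.getLast?_concat] at hp
        simp at hp hq
        subst hp; subst hq
        exact hch.1 b (by simp [hR])
      have hvcR : vcnt G (cyc R) = vcnt G (cyc (a :: b :: t')) := by
        have e1 : cyc R = (b :: t') ++ (a :: [b]) := by rw [hcycR, hR]; simp
        have e2 : cyc (a :: b :: t') = a :: b :: (t' ++ [a]) := by rw [hcycL, hR]; simp
        rw [e1, vcnt_append_cons, vcnt_pair, e2, vcnt_cons_cons]
        simp only [List.cons_append]
        omega
      have hicyc : i + 1 + 1 < t'.length + 3 := by rw [hlencycL] at hi; omega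
      have hi' : i + 1 < (cyc R).length := by rw [hlencycR]; omega
      have hgetR : ∀ (j : ℕ) (hj : j < R.length) (hj2 : j < (cyc R).length)
          (hj3 : j + 1 < (cyc (a :: b :: t')).length),
          (cyc R)[j]'hj2 = (cyc (a :: b :: t'))[j+1]'hj3 := by
        intro j hj hj2 hj3
        rw [List.getElem_of_eq hcycR hj2, List.getElem_of_eq hcycL hj3,
          List.getElem_append_left hj, List.getElem_cons_succ]
      have hiR : i < R.length := by rw [hlenR]; omega
      have hi1R : i + 1 < R.length := by rw [hlenR]; omega
      have h3R : 3 ≤ R.length := by rw [hlenR]; omega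
      have hicycR : i < (cyc R).length := by rw [hlencycR]; omega
      have hj3a : i + 1 < (cyc (a :: b :: t')).length := by rw [hlencycL]; omega
      have hvirt' : ¬ G.Adj ((cyc R)[i]'hicycR) ((cyc R)[i+1]'hi') := by
        rw [hgetR i hiR hicycR hj3a, hgetR (i+1) hi1R hi' hi]
        exact hvirt
      obtain ⟨L₂, hp1, hp2, hp3, hp4⟩ :=
        ih R (hRperm.nodup_iff.mpr hnd) h3R hchR hi' hvirt'
      exact ⟨L₂, hp1.trans hRperm, hp2, by rw [hp3, hvcR], hp4⟩



lemma ore_pigeonhole (L : List V) (hnd : L.Nodup) (hm : 2 ≤ L.length) (x y : V)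
    (hx : L[0]'(by omega) = x) (hy : L[L.length - 1]'(by omega) = y)
    (hxy : ¬ G.Adj x y)
    (hdeg : Fintype.card V ≤ G.degree x + G.degree y)
    (hout : ∀ z, z ∉ L → ¬(G.Adj x z ∧ G.Adj y z)) :
    ∃ i, ∃ h : i + 1 < L.length, G.Adj y (L[i]'(by omega)) ∧ G.Adj x L[i+1] := by
  by_contra hcon
  push_neg at hcon
  set n := Fintype.card V with hn
  set m := L.length with hmdef
  set S := L.toFinset with hS
  have hScard : S.card = m := by rw [hS, List.toFinset_card_of_nodup hnd]
  have hmn : m ≤ n := by rw [← hScard]; exact Finset.card_le_univ S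
  set A := G.neighborFinset x with hA
  set B := G.neighborFinset y with hB
  -- outside part
  have hdisj_out : Disjoint (A \ S) (B \ S) := by
    rw [Finset.disjoint_left]
    intro z hzA hzB
    rw [Finset.mem_sdiff, mem_neighborFinset] at hzA hzB
    exact hout z (by rw [← List.mem_toFinset]; exact hzA.2) ⟨hzA.1, hzB.1⟩
  have c1 : (A \ S).card + (B \ S).card ≤ n - m := by
    have hsub : (A \ S) ∪ (B \ S) ⊆ Sᶜ := by
      intro z hz
      rw [Finset.mem_union] at hz
      rw [Finset.mem_compl]
      rcases hz with h | h <;> exact (Finset.mem_sdiff.mp h).2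
    calc (A \ S).card + (B \ S).card = ((A \ S) ∪ (B \ S)).card :=
          (Finset.card_union_of_disjoint hdisj_out).symm
      _ ≤ Sᶜ.card := Finset.card_le_card hsub
      _ = n - m := by rw [Finset.card_compl, hScard]
  -- inside part
  have idx_lt : ∀ v ∈ L, L.idxOf v < m := fun v hv => List.idxOf_lt_length_iff.mpr hv
  have idx_get : ∀ (v : V) (h : v ∈ L), L[L.idxOf v]'(idx_lt v h) = v :=
    fun v h => List.getElem_idxOf (idx_lt v h)
  have hAfacts : ∀ v ∈ A ∩ S, v ∈ L ∧ G.Adj x v ∧ 1 ≤ L.idxOf v ∧ L.idxOf v < m := by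
    intro v hv
    rw [Finset.mem_inter, mem_neighborFinset, List.mem_toFinset] at hv
    refine ⟨hv.2, hv.1, ?_, idx_lt v hv.2⟩
    by_contra h
    push_neg at h
    interval_cases h' : L.idxOf v
    have := idx_get v hv.2
    simp only [h'] at this
    rw [hx] at this
    exact G.ne_of_adj hv.1 this
  have hBfacts : ∀ v ∈ B ∩ S, v ∈ L ∧ G.Adj y v ∧ L.idxOf v < m - 1 := by
    intro v hv
    rw [Finset.mem_inter, mem_neighborFinset, List.mem_toFinset] at hv
    refine ⟨hv.2, hv.1, ?_⟩
    have hlt := idx_lt v hv.2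
    rcases Nat.lt_or_ge (L.idxOf v) (m - 1) with h | h
    · exact h
    · exfalso
      have hidx : L.idxOf v = m - 1 := by omega
      have := idx_get v hv.2
      simp only [hidx] at this
      rw [hy] at this
      exact G.ne_of_adj hv.1 this
  set φ : V → ℕ := fun v => L.idxOf v - 1 with hφ
  set ψ : V → ℕ := fun v => L.idxOf v with hψ
  have hPa : (A ∩ S).image φ ⊆ Finset.range (m - 1) := by
    intro j hj
    rw [Finset.mem_image] at hj
    obtain ⟨v, hv, rfl⟩ := hj
    obtain ⟨_, _, h1, h2⟩ := hAfacts v hv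
    rw [Finset.mem_range]
    simp only [hφ]
    omega
  have hPb : (B ∩ S).image ψ ⊆ Finset.range (m - 1) := by
    intro j hj
    rw [Finset.mem_image] at hj
    obtain ⟨v, hv, rfl⟩ := hj
    obtain ⟨_, _, h2⟩ := hBfacts v hv
    rw [Finset.mem_range]
    simp only [hψ]
    omega
  have hcardA : ((A ∩ S).image φ).card = (A ∩ S).card := by
    apply Finset.card_image_of_injOn
    intro u hu v hv huv
    obtain ⟨huL, _, hu1, _⟩ := hAfacts u hu
    obtain ⟨hvL, _, hv1, _⟩ := hAfacts v hv
    rw [hφ] at huv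
    simp only at huv
    have : L.idxOf u = L.idxOf v := by omega
    exact (List.idxOf_inj huL).mp this
  have hcardB : ((B ∩ S).image ψ).card = (B ∩ S).card := by
    apply Finset.card_image_of_injOn
    intro u hu v hv huv
    obtain ⟨huL, _, _⟩ := hBfacts u hu
    obtain ⟨hvL, _, _⟩ := hBfacts v hv
    exact (List.idxOf_inj huL).mp huv
  have hdisj_in : Disjoint ((A ∩ S).image φ) ((B ∩ S).image ψ) := by
    rw [Finset.disjoint_left]
    intro j hja hjb
    rw [Finset.mem_image] at hja hjb
    obtain ⟨a, ha, hja⟩ := hja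
    obtain ⟨b, hb, hjb⟩ := hjb
    obtain ⟨haL, haAdj, ha1, ha2⟩ := hAfacts a ha
    obtain ⟨hbL, hbAdj, hb2⟩ := hBfacts b hb
    -- j = indexOf a - 1 = indexOf b
    have hia : L.idxOf b + 1 = L.idxOf a := by
      rw [hφ] at hja; rw [hψ] at hjb; simp only at hja hjb; omega
    have hlt : L.idxOf b + 1 < m := by omega
    have h1 : G.Adj y (L[L.idxOf b]'(by omega)) := by rw [idx_get b hbL]; exact hbAdj
    have h2 : G.Adj x (L[L.idxOf b + 1]'(by omega)) := by
      have : L[L.idxOf b + 1]'(by omega) = a := by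
        have := idx_get a haL
        simp only [← hia] at this ⊢
        exact this
      rw [this]; exact haAdj
    exact hcon (L.idxOf b) hlt h1 h2
  have c2 : (A ∩ S).card + (B ∩ S).card ≤ m - 1 := by
    calc (A ∩ S).card + (B ∩ S).card
        = ((A ∩ S).image φ).card + ((B ∩ S).image ψ).card := by rw [hcardA, hcardB]
      _ = (((A ∩ S).image φ) ∪ ((B ∩ S).image ψ)).card :=
          (Finset.card_union_of_disjoint hdisj_in).symm
      _ ≤ (Finset.range (m - 1)).card :=
          Finset.card_le_card (Finset.union_subset hPa hPb)
      _ = m - 1 := Finset.card_range _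
  -- combine
  have hAcard : (A ∩ S).card + (A \ S).card = G.degree x := by
    rw [Finset.card_inter_add_card_sdiff]; rfl
  have hBcard : (B ∩ S).card + (B \ S).card = G.degree y := by
    rw [Finset.card_inter_add_card_sdiff]; rfl
  omega


lemma getLast_eq_of_getLast? {l : List V} (hne : l ≠ []) {w : V}
    (h : l.getLast? = some w) : l.getLast hne = w := by
  rw [List.getLast?_eq_getLast hne] at h
  injection h

lemma vcnt_append_last {l : List V} (hne : l ≠ []) (w : V) :
    vcnt G (l ++ [w]) = vcnt G l + vcnt G [l.getLast hne, w] := by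
  conv_lhs => rw [← List.dropLast_append_getLast hne]
  rw [List.append_assoc, List.singleton_append, vcnt_append_cons,
    List.dropLast_append_getLast hne]

lemma main_induction (c : ℕ) : ∀ (L : List V), vcnt G (cyc L) ≤ c → L.Nodup → 3 ≤ L.length →
    List.Chain' (OreEdge G) (cyc L) →
    ∃ (u : V) (C : G.Walk u u), C.IsCycle ∧ ∀ v ∈ L, v ∈ C.support := by
  induction c with
  | zero =>
    intro L hvc hnd hlen hch
    have h0 : vcnt G (cyc L) = 0 := by omega
    exact exists_cycle_of_adj_chain L hnd hlen ((vcnt_eq_zero_iff _).mp h0)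
  | succ c ih =>
    intro L hvc hnd hlen hch
    by_cases h0 : vcnt G (cyc L) = 0
    · exact exists_cycle_of_adj_chain L hnd hlen ((vcnt_eq_zero_iff _).mp h0)
    obtain ⟨i, hi, hvirt⟩ := exists_virtual_of_vcnt_pos h0
    obtain ⟨L₂, hperm, hch₂, hvc₂, hwrap⟩ := exists_rotation i L hnd hlen hch hi hvirt
    have hnd₂ : L₂.Nodup := hperm.nodup_iff.mpr hnd
    have hlen₂ : 3 ≤ L₂.length := by rw [hperm.length_eq]; exact hlen
    obtain ⟨x, M, rfl⟩ : ∃ x M, L₂ = x :: M := by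
      cases L₂ with
      | nil => simp at hlen₂
      | cons x M => exact ⟨x, M, rfl⟩
    have hxMne : (x :: M) ≠ [] := List.cons_ne_nil x M
    have hlenxM : (x :: M).length = M.length + 1 := List.length_cons
    have hcyc₂ : cyc (x :: M) = (x :: M) ++ [x] := rfl
    set y := (x :: M).getLast (List.cons_ne_nil x M) with hydef
    have hyLast : (x :: M).getLast? = some y := List.getLast?_eq_getLast _
    have hwrapAdj : ¬ G.Adj y x := hwrap y x hyLast rfl
    have hchparts := List.isChain_append.mp (hcyc₂ ▸ hch₂ : List.IsChain (OreEdge G) ((x :: M) ++ [x]))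
    obtain ⟨hchL₂, -, hlink⟩ := hchparts
    have hore_yx : OreEdge G y x := hlink y hyLast x rfl
    have hdeg : Fintype.card V ≤ G.degree x + G.degree y := by
      rcases hore_yx.2 with h | h
      · exact absurd h hwrapAdj
      · omega
    have hAdjxy : ¬ G.Adj x y := fun h => hwrapAdj h.symm
    have hold : vcnt G (cyc (x :: M)) ≤ c + 1 := by rw [hvc₂]; exact hvc
    have holdeq : vcnt G (cyc (x :: M)) = vcnt G (x :: M) + 1 := by
      rw [hcyc₂, vcnt_append_last hxMne x, ← hydef, vcnt_pair, if_neg hwrapAdj]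
    by_cases hz : ∃ z, z ∉ (x :: M) ∧ G.Adj x z ∧ G.Adj y z
    · -- Case 1 : insert an external common neighbor of x and y
      obtain ⟨z, hzL, hxz, hyz⟩ := hz
      have hndz : ((x :: M) ++ [z]).Nodup := by
        rw [List.nodup_append]
        exact ⟨hnd₂, List.nodup_singleton z, by intro a ha b hb hab; simp at hb; subst hb; subst hab; exact hzL ha⟩
      have hcyc₃ : cyc ((x :: M) ++ [z]) = ((x :: M) ++ [z]) ++ [x] := rfl
      have hzne : (x :: M) ++ [z] ≠ [] := by simp
      have hzlast : ((x :: M) ++ [z]).getLast hzne = z :=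
        getLast_eq_of_getLast? hzne List.getLast?_concat
      have hch₃ : List.Chain' (OreEdge G) (cyc ((x :: M) ++ [z])) := by
        rw [hcyc₃]
        refine List.IsChain.append ?_ (List.isChain_singleton x) ?_
        · refine List.IsChain.append hchL₂ (List.isChain_singleton z) ?_
          intro p hp q hq
          rw [hyLast] at hp
          simp at hp hq
          subst hp; subst hq
          exact ore_of_adj hyz
        · intro p hp q hq
          rw [List.getLast?_concat] at hp
          simp at hp hq
          subst hp; subst hq
          exact ore_of_adj hxz.symm
      have hvc₃ : vcnt G (cyc ((x :: M) ++ [z])) ≤ c := by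
        rw [hcyc₃, vcnt_append_last hzne x, hzlast, vcnt_append_last hxMne z, ← hydef,
          vcnt_pair, vcnt_pair, if_pos hyz, if_pos hxz.symm]
        omega
      have hMlen : 2 ≤ M.length := by simp only [List.length_cons] at hlen₂; omega
      obtain ⟨u, C, hC, hmem⟩ := ih ((x :: M) ++ [z]) hvc₃ hndz
        (by simp only [List.length_append, List.length_cons, List.length_nil]; omega) hch₃
      exact ⟨u, C, hC, fun v hv =>
        hmem v (List.mem_append_left _ (hperm.mem_iff.mpr hv))⟩
    · -- Case 2 : Ore rotation
      push_neg at hz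
      have hout : ∀ z, z ∉ (x :: M) → ¬(G.Adj x z ∧ G.Adj y z) := by
        intro z hzL hcontra
        exact (hz z hzL hcontra.1) hcontra.2
      have hm2 : 2 ≤ (x :: M).length := by omega
      have hx0 : (x :: M)[0]'(by omega) = x := rfl
      have hylast : (x :: M)[(x :: M).length - 1]'(by omega) = y := by
        rw [hydef, List.getLast_eq_getElem]
      obtain ⟨j, hjlt, hAdjyj, hAdjxj⟩ :=
        ore_pigeonhole (x :: M) hnd₂ hm2 x y hx0 hylast hAdjxy hdeg hout
      set T := (x :: M).take (j + 1) with hTdef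
      set D := (x :: M).drop (j + 1) with hDdef
      have hTD : T ++ D = x :: M := List.take_append_drop _ _
      have hTlen : T.length = j + 1 := by
        rw [hTdef, List.length_take]; omega
      have hDlen : D.length = (x :: M).length - (j + 1) := by rw [hDdef, List.length_drop]
      have hTne : T ≠ [] := by
        intro h; rw [h] at hTlen; simp at hTlen
      have hDne : D ≠ [] := by
        intro h; rw [h] at hDlen; simp at hDlen; omega
      have hDrne : D.reverse ≠ [] := by simpa using hDne
      set a := (x :: M)[j]'(by omega) with hadef
      set b := (x :: M)[j+1]'hjlt with hbdef
      have hTlast? : T.getLast? = some a := by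
        rw [hTdef, List.getLast?_take, if_neg (Nat.succ_ne_zero j)]
        simp only [Nat.add_sub_cancel]
        rw [List.getElem?_eq_getElem (by omega), Option.some_or]
      have hDhead? : D.head? = some b := by
        rw [hDdef, List.head?_drop, List.getElem?_eq_getElem hjlt, hbdef]
      have hDlast? : D.getLast? = some y := by
        rw [hDdef, List.getLast?_drop, if_neg (by omega), hyLast]
      have hTlast : T.getLast hTne = a := getLast_eq_of_getLast? hTne hTlast?
      have hadjay : G.Adj a y := hAdjyj.symm
      have hadjbx : G.Adj b x := hAdjxj.symm
      -- chain on T and D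
      rw [← hTD] at hchL₂
      have hchT : List.Chain' (OreEdge G) T := hchL₂.left_of_append
      have hchD : List.Chain' (OreEdge G) D := hchL₂.right_of_append
      have hchDrev : List.Chain' (OreEdge G) D.reverse := by
        rw [List.Chain', List.isChain_reverse]
        exact List.IsChain.imp (fun a b h => ore_symm h) hchD
      -- the new list
      have hperm₃ : (T ++ D.reverse).Perm (x :: M) := by
        rw [← hTD]
        exact List.Perm.append_left T (List.reverse_perm D)
      have hnd₃ : (T ++ D.reverse).Nodup := hperm₃.nodup_iff.mpr hnd₂
      have hlen₃ : 3 ≤ (T ++ D.reverse).length := by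
        rw [hperm₃.length_eq]; omega
      have hT1 : T.take 1 = [x] := by
        rw [hTdef, List.take_take]
        simp
      have htake₃ : (T ++ D.reverse).take 1 = [x] := by
        rw [List.take_append, hT1]
        simp [hTlen]
      have hcyc₃ : cyc (T ++ D.reverse) = (T ++ D.reverse) ++ [x] := by
        rw [cyc, htake₃]
      have hTDrne : T ++ D.reverse ≠ [] := by simp [hTne]
      have hTDrlast : (T ++ D.reverse).getLast hTDrne = b := by
        apply getLast_eq_of_getLast?
        rw [List.getLast?_append_of_ne_nil _ hDrne, List.getLast?_reverse, hDhead?]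
      have hch₃ : List.Chain' (OreEdge G) (cyc (T ++ D.reverse)) := by
        rw [hcyc₃]
        refine List.IsChain.append ?_ (List.isChain_singleton x) ?_
        · refine List.IsChain.append hchT hchDrev ?_
          intro p hp q hq
          rw [hTlast?] at hp
          rw [List.head?_reverse, hDlast?] at hq
          simp at hp hq
          subst hp; subst hq
          exact ore_of_adj hadjay
        · intro p hp q hq
          rw [List.getLast?_append_of_ne_nil _ hDrne, List.getLast?_reverse, hDhead?] at hp
          simp at hp hq
          subst hp; subst hq
          exact ore_of_adj hadjbx
      -- counting
      have hDhead : D.head hDne = b := by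
        rw [List.head?_eq_head hDne] at hDhead?
        injection hDhead?
      have hD₂ : D = b :: D.tail := by rw [← hDhead, List.cons_head_tail]
      have hDrevhead? : D.reverse.head? = some y := by rw [List.head?_reverse, hDlast?]
      have hDrevhead : D.reverse.head hDrne = y := by
        rw [List.head?_eq_head hDrne] at hDrevhead?
        injection hDrevhead?
      have hE : D.reverse = y :: D.reverse.tail := by rw [← hDrevhead, List.cons_head_tail]
      have hvcTb : vcnt G (T ++ [b]) = vcnt G T + vcnt G [a, b] := by
        rw [vcnt_append_last hTne b, hTlast]
      have hvcTy : vcnt G (T ++ [y]) = vcnt G T + vcnt G [a, y] := by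
        rw [vcnt_append_last hTne y, hTlast]
      have holdsplit : vcnt G (x :: M) = vcnt G (T ++ [b]) + vcnt G D := by
        conv_lhs => rw [← hTD, hD₂]
        rw [vcnt_append_cons, ← hD₂]
      have hnewsplit : vcnt G (T ++ D.reverse) = vcnt G (T ++ [y]) + vcnt G D.reverse := by
        conv_lhs => rw [hE]
        rw [vcnt_append_cons, ← hE]
      have hvc₃ : vcnt G (cyc (T ++ D.reverse)) ≤ c := by
        have h1 : vcnt G (cyc (T ++ D.reverse)) =
            vcnt G (T ++ D.reverse) + vcnt G [b, x] := by
          rw [hcyc₃, vcnt_append_last hTDrne x, hTDrlast]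
        have h2 : vcnt G [b, x] = 0 := by rw [vcnt_pair, if_pos hadjbx]
        have h3 : vcnt G [a, y] = 0 := by rw [vcnt_pair, if_pos hadjay]
        have h4 : vcnt G T ≤ vcnt G (T ++ [b]) := vcnt_le_append_singleton T b
        have h5 : vcnt G D.reverse = vcnt G D := vcnt_reverse D
        omega
      obtain ⟨u, C, hC, hmem⟩ := ih (T ++ D.reverse) hvc₃ hnd₃ hlen₃ hch₃
      exact ⟨u, C, hC, fun v hv =>
        hmem v (hperm₃.mem_iff.mpr (hperm.mem_iff.mpr hv))⟩


end OreAux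

open SimpleGraph

/-- **Li–Ryjáček–Wang–Zhang lemma.** If `v₁ v₂ … v_k v₁` is an Ore-cycle of `G`
(distinct vertices, consecutive ones joined by Ore-edges, indices mod `k`),
then `G` has an actual cycle containing all the vertices `v₁, …, v_k`. -/
theorem ore_cycle_to_cycle {V : Type*} [Fintype V] [DecidableEq V]
    (G : SimpleGraph V) [DecidableRel G.Adj]
    (k : ℕ) (hk : 3 ≤ k)
    (f : ZMod k → V) (hinj : Function.Injective f)
    (hore : ∀ i : ZMod k, OreEdge G (f i) (f (i + 1))) :
    ∃ (u : V) (C : G.Walk u u), C.IsCycle ∧ ∀ i : ZMod k, f i ∈ C.support := by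

  have hkz : NeZero k := ⟨by omega⟩
  set L : List V := (List.range k).map (fun n : ℕ => f (n : ZMod k)) with hLdef
  have hlenL : L.length = k := by simp [hLdef]
  have hndL : L.Nodup := by
    rw [hLdef]
    refine List.Nodup.map_on ?_ (List.nodup_range)
    intro i hi j hj hf
    have h1 := hinj hf
    have h2 : ((i : ZMod k)).val = i := ZMod.val_cast_of_lt (List.mem_range.mp hi)
    have h3 : ((j : ZMod k)).val = j := ZMod.val_cast_of_lt (List.mem_range.mp hj)
    rw [← h2, ← h3, h1]
  have hgetL : ∀ (i : ℕ) (hi : i < L.length), L[i] = f (i : ZMod k) := by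
    intro i hi
    simp [hLdef]
  have h1k : min 1 k = 1 := by omega
  have htake : L.take 1 = [f ((0 : ℕ) : ZMod k)] := by
    rw [hLdef, ← List.map_take, List.take_range, h1k]
    simp [List.range_succ]
  have hcycL : cyc L = L ++ [f ((0 : ℕ) : ZMod k)] := by rw [cyc, htake]
  have hcyclen : (cyc L).length = k + 1 := by
    rw [hcycL, List.length_append, hlenL]
    simp
  have hget : ∀ (i : ℕ) (hi : i < (cyc L).length), (cyc L)[i] = f (i : ZMod k) := by
    intro i hi
    have hi' : i < k + 1 := by rw [← hcyclen]; exact hi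
    rcases Nat.lt_or_ge i k with h | h
    · rw [List.getElem_of_eq hcycL hi, List.getElem_append_left (by omega),
        hgetL i (by omega)]
    · have hik : i = k := by omega
      have e0 : ((i : ℕ) : ZMod k) = ((0 : ℕ) : ZMod k) := by
        rw [hik, Nat.cast_zero, ZMod.natCast_self]
      rw [List.getElem_of_eq hcycL hi, List.getElem_append_right (by omega), e0]
      have h2 : i - L.length = 0 := by omega
      simp [h2]
  have hchain : List.Chain' (OreEdge G) (cyc L) := by
    rw [List.Chain', List.isChain_iff_getElem]
    intro i hi
    have hi1 : i + 1 < (cyc L).length := by omega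
    have hi0 : i < (cyc L).length := by omega
    rw [hget i hi0, hget (i+1) hi1]
    have hcast : ((i + 1 : ℕ) : ZMod k) = (i : ZMod k) + 1 := by push_cast; ring
    rw [hcast]
    exact hore _
  obtain ⟨u, C, hC, hmem⟩ :=
    main_induction (vcnt G (cyc L)) L le_rfl hndL (by omega) hchain
  refine ⟨u, C, hC, fun i => ?_⟩
  have hival : ((i.val : ℕ) : ZMod k) = i := ZMod.natCast_rightInverse i
  apply hmem
  rw [hLdef]
  exact List.mem_map.mpr ⟨i.val, List.mem_range.mpr (ZMod.val_lt i), by rw [hival]⟩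
end

section
/- Let G be a non-Hamiltonian graph on n vertices, C a longest cycle of G with a fixed orientation, R a connected component of G − V(C), and A the set of vertices on C having a neighbor in R. Then for every u ∈ R and every v ∈ A, neither {u, v⁻} nor {u, v⁺} belongs to Ẽ(G), where v⁻ and v⁺ are the predecessor and successor of v on C and Ẽ(G) = {xy : xy ∈ E(G) or deg(x)+deg(y) ≥ n}. -/
open SimpleGraph

/-- The cycle `C = f 0, f 1, …, f (m-1), f 0` in `G`, with the orientation given
by increasing indices (so `f (i+1)` is the successor and `f (i-1)` the
predecessor of `f i` on `C`). -/
def IsCycleEmbedding {V : Type*} (G : SimpleGraph V) (m : ℕ) (f : ZMod m → V) : Prop :=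
  3 ≤ m ∧ Function.Injective f ∧ ∀ i : ZMod m, G.Adj (f i) (f (i + 1))

/-- `f` describes a longest cycle of `G` (of length `m`). -/
def IsLongestCycle {V : Type*} (G : SimpleGraph V) (m : ℕ) (f : ZMod m → V) : Prop :=
  IsCycleEmbedding G m f ∧
  ∀ (u : V) (C : G.Walk u u), C.IsCycle → C.length ≤ m

/-- `R` is a connected component of `G - V(C)`, where `C` is the cycle given
by `f`: `R` is a nonempty set of vertices off `C`, connected in the induced
subgraph, and closed under adjacency to vertices off `C`. -/
def IsComponentOutside {V : Type*} (G : SimpleGraph V) (m : ℕ) (f : ZMod m → V)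
    (R : Set V) : Prop :=
  R.Nonempty ∧ (∀ x ∈ R, x ∉ Set.range f) ∧ (G.induce R).Connected ∧
  ∀ x ∈ R, ∀ y : V, G.Adj x y → y ∉ Set.range f → y ∈ R

namespace L3Aux
variable {V : Type*} {G : SimpleGraph V} {m : ℕ} {f : ZMod m → V} {R : Set V}

/-- walk along the cycle from `f s` upward for `k` steps -/
def cWalk (h : ∀ i : ZMod m, G.Adj (f i) (f (i+1))) :
    (k : ℕ) → (s : ZMod m) → G.Walk (f s) (f (s + (k : ℕ)))
  | 0, s => Walk.nil.copy rfl (by simp)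
  | (k+1), s => (Walk.cons (h s) (cWalk h k (s+1))).copy rfl (by push_cast; ring_nf)

@[simp] lemma cWalk_length (h : ∀ i : ZMod m, G.Adj (f i) (f (i+1))) (k : ℕ) (s : ZMod m) :
    (cWalk h k s).length = k := by
  induction k generalizing s with
  | zero => simp [cWalk]
  | succ k ih => simp [cWalk, ih]

lemma cWalk_support (h : ∀ i : ZMod m, G.Adj (f i) (f (i+1))) (k : ℕ) (s : ZMod m) :
    (cWalk h k s).support = (List.range (k+1)).map (fun t => f (s + (t : ℕ))) := by
  induction k generalizing s with
  | zero => simp [cWalk, List.range_succ]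
  | succ k ih =>
      rw [cWalk, Walk.support_copy, Walk.support_cons, ih]
      conv_rhs => rw [List.range_succ_eq_map]
      simp only [List.map_cons, List.map_map, Nat.cast_zero, add_zero]
      congr 1
      apply List.map_congr_left
      intro t _
      simp only [Function.comp_apply]
      congr 1
      push_cast
      ring

lemma cast_inj_of_lt {a b : ℕ} (ha : a < m) (hb : b < m) (h : (a : ZMod m) = b) : a = b := by
  haveI : NeZero m := ⟨by omega⟩
  have h1 := ZMod.val_cast_of_lt ha
  have h2 := ZMod.val_cast_of_lt hb
  rw [h] at h1
  omega

lemma exists_path_in (hconn : (G.induce R).Connected) {x y : V} (hx : x ∈ R) (hy : y ∈ R) :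
    ∃ p : G.Walk x y, p.IsPath ∧ ∀ z ∈ p.support, z ∈ R := by
  classical
  obtain ⟨w⟩ := hconn.preconnected ⟨x, hx⟩ ⟨y, hy⟩
  let emb := SimpleGraph.Embedding.induce (G := G) R
  refine ⟨(w.toPath.val.map emb.toHom),
    Walk.map_isPath_of_injective (f := emb.toHom) (fun a b hab => emb.injective hab) w.toPath.2, ?_⟩
  intro z hz
  have hz : z ∈ (Walk.map emb.toHom w.toPath.val).support := hz
  rw [Walk.support_map, List.mem_map] at hz
  obtain ⟨⟨z', hz'⟩, -, rfl⟩ := hz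
  exact hz'

/-- If both `f 0` and `f 1` have neighbors in `R`, the cycle can be extended. -/
lemma extension_absurd (hC : IsLongestCycle G m f) (hR : IsComponentOutside G m f R)
    {x y : V} (hx : x ∈ R) (hy : y ∈ R) (hfx : G.Adj (f 0) x) (hfy : G.Adj (f 1) y) :
    False := by
  obtain ⟨⟨hm, hinj, hadj⟩, hmax⟩ := hC
  obtain ⟨-, hoff, hconn, -⟩ := hR
  obtain ⟨P, hP, hPR⟩ := exists_path_in hconn hx hy
  have hend : f (1 + ((m - 1 : ℕ) : ZMod m)) = f 0 := by
    congr 1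
    have h1 : ((m - 1 : ℕ) : ZMod m) = (m : ZMod m) - 1 := by
      push_cast [Nat.cast_sub (by omega : 1 ≤ m)]; ring
    rw [h1, ZMod.natCast_self]; ring
  let D : G.Walk (f 1) (f 0) := (cWalk hadj (m - 1) 1).copy rfl hend
  let Q : G.Walk x (f 0) := P.append (Walk.cons hfy.symm D)
  have hQsup : Q.support = P.support ++ D.support := by
    simp [Q, Walk.support_append]
  have hDsup : D.support = (List.range m).map (fun t => f (1 + (t : ℕ))) := by
    simp only [D, Walk.support_copy, cWalk_support]
    congr 2
    omega
  have hzero_one : (0 : ZMod m) ≠ 1 := by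
    intro h
    have := cast_inj_of_lt (by omega : 0 < m) (by omega : 1 < m)
      (by exact_mod_cast h)
    omega
  have hDnodup : D.support.Nodup := by
    rw [hDsup]
    refine List.Nodup.map_on ?_ (List.nodup_range : (List.range m).Nodup)
    intro t1 ht1 t2 ht2 hft
    rw [List.mem_range] at ht1 ht2
    exact cast_inj_of_lt ht1 ht2 (add_left_cancel (hinj hft))
  have hDrange : ∀ z ∈ D.support, z ∈ Set.range f := by
    intro z hz; rw [hDsup, List.mem_map] at hz; obtain ⟨t, -, rfl⟩ := hz; exact ⟨_, rfl⟩
  have hQpath : Q.IsPath := by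
    rw [Walk.isPath_def, hQsup, List.nodup_append]
    exact ⟨hP.support_nodup, hDnodup, fun z hz z' hz' hzz' => hoff z (hPR z hz) (hDrange z (hzz' ▸ hz'))⟩
  have hcyc : (Walk.cons hfx Q).IsCycle := by
    rw [Walk.cons_isCycle_iff]
    refine ⟨hQpath, fun he => ?_⟩
    simp only [Q, Walk.edges_append, List.mem_append] at he
    rcases he with he | he
    · exact hoff (f 0) (hPR _ (Walk.fst_mem_support_of_mem_edges P he)) ⟨0, rfl⟩
    · rw [Walk.edges_cons, List.mem_cons] at he
      rcases he with he | he
      · rw [Sym2.eq_iff] at he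
        rcases he with ⟨h1, h2⟩ | ⟨h1, h2⟩
        · exact hoff (f 0) (by rw [h1]; exact hy) ⟨0, rfl⟩
        · exact hzero_one (hinj h1)
      · exact hoff x hx (hDrange _ (Walk.snd_mem_support_of_mem_edges D he))
  have hlen := hmax _ _ hcyc
  have hlen2 : (Walk.cons hfx Q).length = 1 + (P.length + (1 + (m - 1))) := by
    simp [Q, D, Walk.length_append]
    omega
  omega


/-- Crossing construction: if `u ∈ R` is adjacent to `f j` and `f 1` is adjacent
to `f (j+1)` (with `j ∉ {0,1}`), and `f 0` has a neighbor in `R`, we get a longer cycle. -/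
lemma crossing_absurd (hC : IsLongestCycle G m f) (hR : IsComponentOutside G m f R)
    {x u : V} (hx : x ∈ R) (hu : u ∈ R) (hfx : G.Adj (f 0) x)
    {j : ZMod m} (hj0 : j ≠ 0) (hj1 : j ≠ 1)
    (huj : G.Adj u (f j)) (h1j : G.Adj (f 1) (f (j + 1))) : False := by
  obtain ⟨⟨hm, hinj, hadj⟩, hmax⟩ := hC
  obtain ⟨-, hoff, hconn, -⟩ := hR
  haveI : NeZero m := ⟨by omega⟩
  obtain ⟨P, hP, hPR⟩ := exists_path_in hconn hx hu
  set jn := j.val with hjn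
  have hjcast : ((jn : ℕ) : ZMod m) = j := by rw [ZMod.natCast_val, ZMod.cast_id]
  have hjnlt : jn < m := ZMod.val_lt j
  have hjn0 : jn ≠ 0 := fun h => hj0 (by rw [← hjcast, h]; simp)
  have hjn1 : jn ≠ 1 := fun h => hj1 (by rw [← hjcast, h]; simp)
  have hzero_one : (0 : ZMod m) ≠ 1 := by
    intro h
    have := cast_inj_of_lt (by omega : 0 < m) (by omega : 1 < m) (by exact_mod_cast h)
    omega
  -- the descending segment from f j to f 1
  have hD1end : f (1 + ((jn - 1 : ℕ) : ZMod m)) = f j := by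
    congr 1
    have h1 : (1 : ZMod m) + ((jn - 1 : ℕ) : ZMod m) = ((1 + (jn - 1) : ℕ) : ZMod m) := by
      push_cast; ring
    rw [h1, show 1 + (jn - 1) = jn from by omega, hjcast]
  have hD2end : f ((j + 1) + ((m - 1 - jn : ℕ) : ZMod m)) = f 0 := by
    congr 1
    rw [← hjcast]
    have h1 : ((jn : ℕ) : ZMod m) + 1 + ((m - 1 - jn : ℕ) : ZMod m)
        = ((jn + 1 + (m - 1 - jn) : ℕ) : ZMod m) := by push_cast; ring
    rw [h1, show jn + 1 + (m - 1 - jn) = m from by omega, ZMod.natCast_self]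
  let D1 : G.Walk (f j) (f 1) := ((cWalk hadj (jn - 1) 1).copy rfl hD1end).reverse
  let D2 : G.Walk (f (j + 1)) (f 0) := (cWalk hadj (m - 1 - jn) (j + 1)).copy rfl hD2end
  have hD1sup : D1.support = (((List.range jn).map (fun t => f (1 + (t : ℕ))))).reverse := by
    simp only [D1, Walk.support_reverse, Walk.support_copy, cWalk_support,
      show jn - 1 + 1 = jn from by omega]
  have hD2sup : D2.support = (List.range (m - jn)).map (fun t => f (j + 1 + (t : ℕ))) := by
    simp only [D2, Walk.support_copy, cWalk_support,
      show m - 1 - jn + 1 = m - jn from by omega]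
  have hD1range : ∀ z ∈ D1.support, z ∈ Set.range f := by
    intro z hz
    rw [hD1sup, List.mem_reverse, List.mem_map] at hz
    obtain ⟨t, -, rfl⟩ := hz; exact ⟨_, rfl⟩
  have hD2range : ∀ z ∈ D2.support, z ∈ Set.range f := by
    intro z hz
    rw [hD2sup, List.mem_map] at hz
    obtain ⟨t, -, rfl⟩ := hz; exact ⟨_, rfl⟩
  have hD1nodup : D1.support.Nodup := by
    rw [hD1sup, List.nodup_reverse]
    refine List.Nodup.map_on ?_ (List.nodup_range : (List.range jn).Nodup)
    intro t1 ht1 t2 ht2 hft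
    rw [List.mem_range] at ht1 ht2
    exact cast_inj_of_lt (by omega) (by omega) (add_left_cancel (hinj hft))
  have hD2nodup : D2.support.Nodup := by
    rw [hD2sup]
    refine List.Nodup.map_on ?_ (List.nodup_range : (List.range (m - jn)).Nodup)
    intro t1 ht1 t2 ht2 hft
    rw [List.mem_range] at ht1 ht2
    exact cast_inj_of_lt (by omega) (by omega) (add_left_cancel (hinj hft))
  have hD12disj : ∀ z ∈ D1.support, z ∉ D2.support := by
    intro z hz1 hz2
    rw [hD1sup, List.mem_reverse, List.mem_map] at hz1
    rw [hD2sup, List.mem_map] at hz2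
    obtain ⟨t1, ht1, rfl⟩ := hz1
    obtain ⟨t2, ht2, heq⟩ := hz2
    rw [List.mem_range] at ht1 ht2
    have hcast : ((1 + t1 : ℕ) : ZMod m) = ((jn + 1 + t2 : ℕ) : ZMod m) := by
      have := hinj heq
      rw [← hjcast] at this
      push_cast at this ⊢
      linear_combination - this
    by_cases hb : jn + 1 + t2 < m
    · have := cast_inj_of_lt (by omega) hb hcast
      omega
    · have hbm : jn + 1 + t2 = m := by omega
      rw [hbm, ZMod.natCast_self] at hcast
      have := cast_inj_of_lt (show 1 + t1 < m from by omega) (by omega : 0 < m)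
        (by rw [hcast]; simp)
      omega
  -- the long closed walk
  let Q : G.Walk x (f 0) := P.append (Walk.cons huj (D1.append (Walk.cons h1j D2)))
  have hQsup : Q.support = P.support ++ (D1.support ++ D2.support) := by
    simp [Q, Walk.support_append]
  have hQpath : Q.IsPath := by
    rw [Walk.isPath_def, hQsup, List.nodup_append]
    refine ⟨hP.support_nodup, ?_, ?_⟩
    · rw [List.nodup_append]
      exact ⟨hD1nodup, hD2nodup, fun a ha b hb hab => hD12disj a ha (hab ▸ hb)⟩
    · intro z hz z' hz' hzz'
      rw [← hzz'] at hz'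
      rw [List.mem_append] at hz'
      rcases hz' with hz' | hz'
      · exact hoff z (hPR z hz) (hD1range z hz')
      · exact hoff z (hPR z hz) (hD2range z hz')
  have hcyc : (Walk.cons hfx Q).IsCycle := by
    rw [Walk.cons_isCycle_iff]
    refine ⟨hQpath, fun he => ?_⟩
    simp only [Q, Walk.edges_append, Walk.edges_cons, List.mem_append, List.mem_cons] at he
    rcases he with he | he | he | he | he
    · exact hoff (f 0) (hPR _ (Walk.fst_mem_support_of_mem_edges P he)) ⟨0, rfl⟩
    · rw [Sym2.eq_iff] at he
      rcases he with ⟨h1, h2⟩ | ⟨h1, h2⟩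
      · exact hoff (f 0) (by rw [h1]; exact hu) ⟨0, rfl⟩
      · exact hj0 (hinj h1).symm
    · exact hoff x hx (hD1range _ (Walk.snd_mem_support_of_mem_edges D1 he))
    · rw [Sym2.eq_iff] at he
      rcases he with ⟨h1, h2⟩ | ⟨h1, h2⟩
      · exact hzero_one (hinj h1)
      · exact hoff x hx (by rw [h2]; exact ⟨1, rfl⟩)
    · exact hoff x hx (hD2range _ (Walk.snd_mem_support_of_mem_edges D2 he))
  have hlen := hmax _ _ hcyc
  have hlen2 : (Walk.cons hfx Q).length
      = 1 + (P.length + (1 + ((jn - 1) + (1 + (m - 1 - jn))))) := by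
    simp [Q, D1, D2, Walk.length_append]
    omega
  omega


lemma key [Fintype V] [DecidableEq V] [DecidableRel G.Adj]
    (hC : IsLongestCycle G m f) (hR : IsComponentOutside G m f R)
    {u : V} (hu : u ∈ R) (hA : ∃ x ∈ R, G.Adj (f 0) x) : ¬OreEdge G u (f 1) := by
  obtain ⟨x, hx, hfx⟩ := hA
  rintro ⟨hne, hcase⟩
  obtain ⟨⟨hm, hinj, hadj⟩, hmax⟩ := id hC
  obtain ⟨-, hoff, hconn, hclosed⟩ := id hR
  haveI : NeZero m := ⟨by omega⟩
  have hu1 : ¬G.Adj u (f 1) := fun h => extension_absurd hC hR hx hu hfx h.symm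
  have hno : ∀ y ∈ R, ¬G.Adj (f 1) y := fun y hy h => extension_absurd hC hR hx hy hfx h
  rcases hcase with hadj' | hdeg
  · exact hu1 hadj'
  -- counting argument
  set Rf : Finset V := (Set.toFinite R).toFinset with hRf
  have hmemRf : ∀ z : V, z ∈ Rf ↔ z ∈ R := fun z => Set.Finite.mem_toFinset _
  set Ju : Finset (ZMod m) := Finset.univ.filter (fun j => G.Adj u (f j)) with hJu
  set S : Finset V := Ju.image (fun j => f (j + 1)) with hS
  -- neighbors of u
  have hsub1 : G.neighborFinset u ⊆ (Rf.erase u) ∪ Ju.image f := by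
    intro y hy
    rw [mem_neighborFinset] at hy
    by_cases hyf : y ∈ Set.range f
    · obtain ⟨j, rfl⟩ := hyf
      refine Finset.mem_union_right _ (Finset.mem_image.2 ⟨j, ?_, rfl⟩)
      rw [hJu, Finset.mem_filter]
      exact ⟨Finset.mem_univ _, hy⟩
    · refine Finset.mem_union_left _ (Finset.mem_erase.2 ⟨hy.ne', ?_⟩)
      rw [hmemRf]
      exact hclosed u hu y hy hyf
  have hdegu : G.degree u ≤ (Rf.card - 1) + Ju.card := by
    calc G.degree u = (G.neighborFinset u).card := rfl
      _ ≤ ((Rf.erase u) ∪ Ju.image f).card := Finset.card_le_card hsub1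
      _ ≤ (Rf.erase u).card + (Ju.image f).card := Finset.card_union_le _ _
      _ ≤ (Rf.card - 1) + Ju.card := by
          gcongr
          · rw [Finset.card_erase_of_mem ((hmemRf u).2 hu)]
          · exact Finset.card_image_le
  -- neighbors of f 1 avoid Rf and S
  have hsub2 : G.neighborFinset (f 1) ⊆ Finset.univ \ (Rf ∪ S) := by
    intro y hy
    rw [mem_neighborFinset] at hy
    rw [Finset.mem_sdiff, Finset.mem_union]
    refine ⟨Finset.mem_univ _, fun hmem => ?_⟩
    rcases hmem with hmem | hmem
    · exact hno y ((hmemRf y).1 hmem) hy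
    · rw [hS, Finset.mem_image] at hmem
      obtain ⟨j, hj, rfl⟩ := hmem
      rw [hJu, Finset.mem_filter] at hj
      have huj : G.Adj u (f j) := hj.2
      by_cases hj0 : j = 0
      · subst hj0
        simp only [zero_add] at hy
        exact G.irrefl hy
      by_cases hj1 : j = 1
      · subst hj1
        exact hu1 huj
      exact crossing_absurd hC hR hx hu hfx hj0 hj1 huj hy
  have hScard : S.card = Ju.card := by
    rw [hS]
    apply Finset.card_image_of_injective
    intro a b hab
    exact add_right_cancel (hinj hab)
  have hdisj : Disjoint Rf S := by
    rw [Finset.disjoint_left]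
    intro z hz1 hz2
    rw [hS, Finset.mem_image] at hz2
    obtain ⟨j, -, rfl⟩ := hz2
    exact hoff _ ((hmemRf _).1 hz1) ⟨_, rfl⟩
  have hcardUnion : Rf.card + Ju.card ≤ Fintype.card V := by
    rw [← hScard, ← Finset.card_union_of_disjoint hdisj]
    exact (Finset.card_le_card (Finset.subset_univ _)).trans_eq (Finset.card_univ)
  have hdegf1 : G.degree (f 1) ≤ Fintype.card V - (Rf.card + Ju.card) := by
    calc G.degree (f 1) = (G.neighborFinset (f 1)).card := rfl
      _ ≤ (Finset.univ \ (Rf ∪ S)).card := Finset.card_le_card hsub2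
      _ = Fintype.card V - (Rf.card + Ju.card) := by
          rw [Finset.card_sdiff_of_subset (Finset.subset_univ _), Finset.card_univ,
            Finset.card_union_of_disjoint hdisj, hScard]
  have hRf1 : 1 ≤ Rf.card := Finset.card_pos.2 ⟨u, (hmemRf u).2 hu⟩
  omega

end L3Aux

/-- **Lemma 3(a) of the paper.** `G` non-Hamiltonian, `C` a longest cycle, `R` a
component of `G - V(C)`. For every `u ∈ R` and every vertex `f i` of `C` having
a neighbor in `R`, neither `{u, (f i)⁻}` nor `{u, (f i)⁺}` is an Ore-edge. -/
theorem lemma3a {V : Type*} [Fintype V] [DecidableEq V]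
    (G : SimpleGraph V) [DecidableRel G.Adj]
    (hnh : ¬G.IsHamiltonian)
    (m : ℕ) (f : ZMod m → V) (hC : IsLongestCycle G m f)
    (R : Set V) (hR : IsComponentOutside G m f R)
    (u : V) (hu : u ∈ R)
    (i : ZMod m) (hA : ∃ x ∈ R, G.Adj (f i) x) :
    ¬OreEdge G u (f (i - 1)) ∧ ¬OreEdge G u (f (i + 1)) := by

  obtain ⟨⟨hm, hinj, hadj⟩, hmax⟩ := id hC
  constructor
  · -- predecessor: reverse the orientation
    set g : ZMod m → V := fun k => f (i - k) with hg
    have hginj : Function.Injective g := fun a b hab => by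
      have := hinj hab
      rwa [sub_right_inj] at this
    have hgadj : ∀ k : ZMod m, G.Adj (g k) (g (k + 1)) := by
      intro k
      have := hadj (i - k - 1)
      rw [sub_add_cancel] at this
      have h2 : i - (k + 1) = i - k - 1 := by ring
      rw [hg]
      simp only [h2]
      exact this.symm
    have hrange : Set.range g = Set.range f := by
      ext z
      constructor
      · rintro ⟨k, rfl⟩; exact ⟨i - k, rfl⟩
      · rintro ⟨k, rfl⟩; exact ⟨i - k, by simp [hg]⟩
    have hCg : IsLongestCycle G m g := ⟨⟨hm, hginj, hgadj⟩, hmax⟩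
    have hRg : IsComponentOutside G m g R :=
      ⟨hR.1, fun z hz hr => hR.2.1 z hz (hrange ▸ hr), hR.2.2.1,
        fun z hz y hzy hy => hR.2.2.2 z hz y hzy (fun hy' => hy (hrange ▸ hy'))⟩
    have hAg : ∃ x ∈ R, G.Adj (g 0) x := by
      simpa [hg] using hA
    have := L3Aux.key hCg hRg hu hAg
    simpa [hg] using this
  · -- successor: shift the origin
    set g : ZMod m → V := fun k => f (i + k) with hg
    have hginj : Function.Injective g := fun a b hab => by
      have := hinj hab
      rwa [add_right_inj] at this
    have hgadj : ∀ k : ZMod m, G.Adj (g k) (g (k + 1)) := by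
      intro k
      have := hadj (i + k)
      rw [hg]
      simp only [← add_assoc]
      exact this
    have hrange : Set.range g = Set.range f := by
      ext z
      constructor
      · rintro ⟨k, rfl⟩; exact ⟨i + k, rfl⟩
      · rintro ⟨k, rfl⟩; exact ⟨k - i, by simp [hg]⟩
    have hCg : IsLongestCycle G m g := ⟨⟨hm, hginj, hgadj⟩, hmax⟩
    have hRg : IsComponentOutside G m g R :=
      ⟨hR.1, fun z hz hr => hR.2.1 z hz (hrange ▸ hr), hR.2.2.1,
        fun z hz y hzy hy => hR.2.2.2 z hz y hzy (fun hy' => hy (hrange ▸ hy'))⟩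
    have hAg : ∃ x ∈ R, G.Adj (g 0) x := by
      simpa [hg] using hA
    have := L3Aux.key hCg hRg hu hAg
    simpa [hg] using this
end

section
/- Let G be a non-Hamiltonian graph on n vertices, C a longest cycle with a fixed orientation, R a component of G − V(C), and A the set of neighbors of R on C. If v_i, v_j ∈ A are distinct and {v_i⁻, v_i⁺} ∈ Ẽ(G), then neither {v_i, v_j⁻} nor {v_i, v_j⁺} belongs to Ẽ(G). -/
open SimpleGraph

section Infra

variable {V : Type*}

/-- In a path starting at `x`, any edge containing `x` is the first edge. -/
lemma edge_start {H : SimpleGraph V} {x a y : V} (r : H.Walk x a) (hr : r.IsPath)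
    (he : s(x, y) ∈ r.edges) : ∃ (h : H.Adj x y) (r' : H.Walk y a), r = Walk.cons h r' := by
  cases r with
  | nil => simp at he
  | @cons _ w _ h' r'' =>
    rw [Walk.edges_cons, List.mem_cons] at he
    rcases he with he | he
    · obtain rfl : y = w := Sym2.congr_right.mp he
      exact ⟨h', r'', rfl⟩
    · rw [Walk.cons_isPath_iff] at hr
      exact absurd (r''.fst_mem_support_of_mem_edges he) hr.2

lemma walk_from_list {H : SimpleGraph V} :
    ∀ (l : List V) (a b : V), l.head? = some a → l.getLast? = some b →
      l.Chain' H.Adj → ∃ w : H.Walk a b, w.support = l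
  | [], a, b, hh, _, _ => by simp at hh
  | [c], a, b, hh, hl, _ => by
    have hac : a = c := by simpa [eq_comm] using hh
    subst hac
    have hab : a = b := by simpa using hl
    subst hab
    exact ⟨Walk.nil, rfl⟩
  | p :: p' :: tl, a, b, hh, hl, hch => by
    have hac : a = p := by simpa [eq_comm] using hh
    subst hac
    have hl' : (p' :: tl).getLast? = some b := by
      rwa [show a :: p' :: tl = [a] ++ (p' :: tl) from rfl,
        List.getLast?_append_of_ne_nil _ (by simp)] at hl
    obtain ⟨hadj, hch'⟩ := List.isChain_cons_cons.mp hch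
    obtain ⟨w, hw⟩ := walk_from_list (p' :: tl) p' b rfl hl' hch'
    exact ⟨Walk.cons hadj w, by rw [Walk.support_cons, hw]⟩

lemma isPath_nil_of_loop {H : SimpleGraph V} {b : V} (r : H.Walk b b) (hr : r.IsPath) :
    r.length = 0 := by
  cases r with
  | nil => rfl
  | cons h q =>
    rw [Walk.cons_isPath_iff] at hr
    exact absurd q.end_mem_support hr.2

lemma cycle_from_list {H : SimpleGraph V} (l : List V) (h3 : 3 ≤ l.length) (hnd : l.Nodup)
    (hch : l.Chain' H.Adj) (a b : V) (hh : l.head? = some a) (hl : l.getLast? = some b)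
    (hcl : H.Adj b a) : ∃ (v : V) (c : H.Walk v v), c.IsCycle ∧ c.length = l.length := by
  obtain ⟨w, hw⟩ := walk_from_list l a b hh hl hch
  have hwp : w.IsPath := by rw [Walk.isPath_def, hw]; exact hnd
  have hlenw : w.length + 1 = l.length := by rw [← hw, Walk.length_support]
  have hne : s(b, a) ∉ w.edges := by
    intro hmem
    rw [Sym2.eq_swap] at hmem
    obtain ⟨hab, r', rfl⟩ := edge_start w hwp hmem
    have := isPath_nil_of_loop r' ((Walk.cons_isPath_iff _ _).mp hwp).1
    rw [Walk.length_cons, this] at hlenw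
    omega
  refine ⟨b, Walk.cons hcl w, ?_, ?_⟩
  · exact (Walk.cons_isCycle_iff w hcl).mpr ⟨hwp, hne⟩
  · rw [Walk.length_cons]; omega

lemma length_rotate {H : SimpleGraph V} [DecidableEq V] {v x : V} (c : H.Walk v v)
    (hx : x ∈ c.support) : (c.rotate x hx).length = c.length := by
  have h2 := congrArg Walk.length (c.take_spec hx)
  rw [Walk.length_append] at h2
  rw [Walk.rotate, Walk.length_append]
  omega

/-- Splitting a cycle at one of its edges produces a path of length one less. -/
lemma cycle_split {H : SimpleGraph V} [DecidableEq V] {v x y : V} (c : H.Walk v v)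
    (hc : c.IsCycle) (he : s(x, y) ∈ c.edges) :
    ∃ p : H.Walk x y, p.IsPath ∧ p.length + 1 = c.length ∧ s(x, y) ∉ p.edges := by
  have hx : x ∈ c.support := c.fst_mem_support_of_mem_edges he
  have hlen := length_rotate c hx
  have hcyc := hc.rotate hx
  have hedge : s(x, y) ∈ (c.rotate x hx).edges := (c.rotate_edges x hx).perm.mem_iff.mpr he
  revert hcyc hedge hlen
  generalize c.rotate x hx = c'
  intro hlen hcyc hedge
  cases c' with
  | nil => simp at hedge
  | @cons _ w _ h q =>
    rw [Walk.cons_isCycle_iff] at hcyc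
    obtain ⟨hq, hxw⟩ := hcyc
    rw [Walk.edges_cons, List.mem_cons] at hedge
    rw [Walk.length_cons] at hlen
    rcases hedge with h1 | h1
    · obtain rfl : y = w := Sym2.congr_right.mp h1
      refine ⟨q.reverse, hq.reverse, by simp [hlen], ?_⟩
      rw [Walk.edges_reverse, List.mem_reverse]
      exact hxw
    · have hyq : s(x, y) ∈ q.reverse.edges := by
        rw [Walk.edges_reverse, List.mem_reverse]; exact h1
      obtain ⟨hxy, r', hr'⟩ := edge_start q.reverse hq.reverse hyq
      have hrl : q.length = r'.length + 1 := by
        have := congrArg Walk.length hr'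
        simpa using this
      have hrp : r'.IsPath ∧ x ∉ r'.support := by
        have := hq.reverse
        rw [hr', Walk.cons_isPath_iff] at this
        exact this
      refine ⟨Walk.cons h r'.reverse, ?_, ?_, ?_⟩
      · rw [Walk.cons_isPath_iff]
        constructor
        · exact hrp.1.reverse
        · rw [Walk.support_reverse, List.mem_reverse]; exact hrp.2
      · rw [Walk.length_cons, Walk.length_reverse]; omega
      · rw [Walk.edges_cons, List.mem_cons]
        rintro (h2 | h2)
        · obtain rfl : y = w := Sym2.congr_right.mp h2
          exact hxw h1
        · rw [Walk.edges_reverse, List.mem_reverse] at h2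
          exact hrp.2 (r'.fst_mem_support_of_mem_edges h2)

end Infra



section X
variable {V : Type*}

lemma head?_append' {α : Type*} (l₁ l₂ : List α) (h : l₁ ≠ []) :
    (l₁ ++ l₂).head? = l₁.head? := by
  cases l₁ with
  | nil => exact absurd rfl h
  | cons a t => simp

/-- Key crossing-count lemma: a graph whose cycles all have length `≤ m` cannot
contain a path on `≥ m+1` vertices between the two ends of an Ore-edge. -/
lemma lemmaX [Fintype V] [DecidableEq V] (H : SimpleGraph V) [DecidableRel H.Adj]
    (m : ℕ) (hm : 3 ≤ m)
    (hlong : ∀ (v : V) (c : H.Walk v v), c.IsCycle → c.length ≤ m)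
    (L : List V) (hnd : L.Nodup) (hch : L.Chain' H.Adj) (hlen : m + 1 ≤ L.length)
    {u w : V} (hu : L.head? = some u) (hw : L.getLast? = some w)
    (hore : OreEdge H u w) : False := by
  classical
  obtain ⟨hneuw, hore2⟩ := hore
  set t := L.length with ht
  have htm : m + 1 ≤ t := hlen
  have hLne : L ≠ [] := by
    apply List.ne_nil_of_length_pos
    omega
  -- getElem versions of head/last
  have hu0 : L[0]? = some u := by rwa [← List.head?_eq_getElem?]
  have hw0 : L[t - 1]? = some w := by rwa [← List.getLast?_eq_getElem?]
  have hu0' : ∀ (h : 0 < t), L[0] = u := by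
    intro h; have := List.getElem?_eq_getElem (l := L) (i := 0) h
    rw [hu0] at this; exact (Option.some_injective _ this.symm)
  have hw0' : ∀ (h : t - 1 < t), L[t-1] = w := by
    intro h; have := List.getElem?_eq_getElem (l := L) (i := t-1) h
    rw [hw0] at this; exact (Option.some_injective _ this.symm)
  -- direct adjacency gives a long cycle
  by_cases hadj : H.Adj u w
  · obtain ⟨v, c, hcyc, hclen⟩ := cycle_from_list L (by omega) hnd hch u w hu hw hadj.symm
    have := hlong v c hcyc; omega
  have hdeg : Fintype.card V ≤ H.degree u + H.degree w := hore2.resolve_left hadj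
  -- crossing configuration gives a long cycle
  have cross : ∀ k, k + 1 < t → (∀ (h : k + 1 < t), H.Adj u L[k+1]) →
      (∀ (h : k < t), H.Adj w L[k]) → False := by
    intro k hk huk hwk
    set L' := L.drop (k+1) ++ (L.take (k+1)).reverse with hL'
    have hdropne : L.drop (k+1) ≠ [] := by
      apply List.ne_nil_of_length_pos
      rw [List.length_drop]; omega
    have htakene : (L.take (k+1)).reverse ≠ [] := by
      apply List.ne_nil_of_length_pos
      rw [List.length_reverse, List.length_take]; omega
    have hlenL' : L'.length = t := by
      simp only [hL', List.length_append, List.length_drop, List.length_reverse,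
        List.length_take]
      omega
    have hndL' : L'.Nodup := by
      have hperm : List.Perm L' L := by
        rw [hL']
        refine ((List.reverse_perm _).append_left _).trans (List.perm_append_comm.trans ?_)
        rw [List.take_append_drop]
      exact hperm.nodup_iff.mpr hnd
    have hchL' : L'.Chain' H.Adj := by
      unfold List.Chain'
      rw [List.isChain_append]
      refine ⟨hch.drop _, ?_, ?_⟩
      · rw [List.isChain_reverse]
        exact (hch.take _).imp (fun a b hab => hab.symm)
      · intro x hx y hy
        rw [List.getLast?_eq_getElem?, List.getElem?_drop] at hx
        simp only [List.length_drop] at hx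
        rw [show k + 1 + (t - (k+1) - 1) = t - 1 by omega] at hx
        rw [hw0] at hx
        rw [List.head?_reverse, List.getLast?_eq_getElem?, List.getElem?_take] at hy
        simp only [List.length_take] at hy
        rw [if_pos (by omega)] at hy
        have hkt : k < t := by omega
        rw [List.getElem?_eq_getElem (l := L) (i := (min (k+1) t) - 1) (by omega)] at hy
        obtain rfl : w = x := by simpa using hx
        obtain rfl : L[(k+1) ⊓ t - 1] = y := by simpa using hy
        have hmineq : (k+1) ⊓ t - 1 = k := by omega
        simp only [hmineq]
        exact hwk hkt

    have hheadL' : L'.head? = some (L[k+1]) := by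
      rw [hL', head?_append' _ _ hdropne, List.head?_eq_getElem?, List.getElem?_drop]
      simp only [Nat.add_zero]
      exact List.getElem?_eq_getElem hk
    have hlastL' : L'.getLast? = some u := by
      rw [hL', List.getLast?_append_of_ne_nil _ htakene, List.getLast?_reverse,
        List.head?_eq_getElem?, List.getElem?_take, if_pos (by omega)]
      rw [List.getElem?_eq_getElem (l := L) (i := 0) (by omega), hu0' (by omega)]
    obtain ⟨v, c, hcyc, hclen⟩ := cycle_from_list L' (by omega) hndL' hchL'
      (L[k+1]) u hheadL' hlastL' (huk hk)
    have := hlong v c hcyc; omega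
  -- common neighbour off the list gives a long cycle
  have common : ∀ z, z ∉ L → H.Adj u z → H.Adj w z → False := by
    intro z hz huz hwz
    set L' := L ++ [z] with hL'
    have hndL' : L'.Nodup := by
      rw [hL', List.nodup_append]
      exact ⟨hnd, List.nodup_singleton z, by intro a ha b hb; simp at hb; subst hb; rintro rfl; exact hz ha⟩
    have hchL' : L'.Chain' H.Adj := by
      unfold List.Chain'
      rw [List.isChain_append]
      refine ⟨hch, List.isChain_singleton z, ?_⟩
      intro x hx y hy
      rw [hw] at hx
      obtain rfl : w = x := by simpa using hx
      obtain rfl : z = y := by simpa using hy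
      exact hwz
    have hheadL' : L'.head? = some u := by rw [hL', head?_append' _ _ hLne, hu]
    have hlastL' : L'.getLast? = some z := by
      rw [hL', List.getLast?_append_of_ne_nil _ (by simp)]; rfl
    have hlenL' : L'.length = t + 1 := by
      simp only [hL', List.length_append, List.length_cons, List.length_nil]; omega
    obtain ⟨v, c, hcyc, hclen⟩ := cycle_from_list L' (by omega) hndL' hchL'
      u z hheadL' hlastL' huz.symm
    have := hlong v c hcyc
    omega
  -- now the counting
  set Lf : Finset V := L.toFinset with hLf
  have hLfcard : Lf.card = t := List.toFinset_card_of_nodup hnd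
  set S : Finset ℕ := ((H.neighborFinset u ∩ Lf).image (fun z => L.idxOf z)) with hS
  set T : Finset ℕ := ((H.neighborFinset w ∩ Lf).image (fun z => L.idxOf z + 1)) with hT
  have hidx1 : ∀ z ∈ Lf, List.idxOf z L < L.length := fun z hz =>
    List.idxOf_lt_length_iff.mpr (List.mem_toFinset.mp hz)
  have hgetz : ∀ z ∈ Lf, L[List.idxOf z L]? = some z := by
    intro z hz
    rw [List.getElem?_eq_getElem (hidx1 z hz), List.getElem_idxOf]
  have someinj : ∀ {a b : V}, some a = some b → a = b := fun h => Option.some_injective _ h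
  have hScard : S.card = (H.neighborFinset u ∩ Lf).card := by
    apply Finset.card_image_of_injOn
    intro z1 h1 z2 h2 heq
    simp only at heq
    have e1 := hgetz z1 (Finset.mem_of_mem_inter_right h1)
    have e2 := hgetz z2 (Finset.mem_of_mem_inter_right h2)
    rw [heq, e2] at e1
    exact (someinj e1).symm
  have hTcard : T.card = (H.neighborFinset w ∩ Lf).card := by
    apply Finset.card_image_of_injOn
    intro z1 h1 z2 h2 heq
    simp only at heq
    have heq' : List.idxOf z1 L = List.idxOf z2 L := by omega
    have e1 := hgetz z1 (Finset.mem_of_mem_inter_right h1)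
    have e2 := hgetz z2 (Finset.mem_of_mem_inter_right h2)
    rw [heq', e2] at e1
    exact (someinj e1).symm
  have hSsub : S ⊆ (Finset.range t).erase 0 := by
    intro k hk
    rw [hS, Finset.mem_image] at hk
    obtain ⟨z, hz, rfl⟩ := hk
    have hzu : H.Adj u z := by
      have := Finset.mem_of_mem_inter_left hz
      rwa [SimpleGraph.mem_neighborFinset] at this
    have hlt := hidx1 z (Finset.mem_of_mem_inter_right hz)
    have e1 := hgetz z (Finset.mem_of_mem_inter_right hz)
    rw [Finset.mem_erase, Finset.mem_range]
    refine ⟨?_, hlt⟩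
    intro h0
    rw [h0, hu0] at e1
    exact hzu.ne (someinj e1)
  have hTsub : T ⊆ (Finset.range t).erase 0 := by
    intro k hk
    rw [hT, Finset.mem_image] at hk
    obtain ⟨z, hz, rfl⟩ := hk
    have hzw : H.Adj w z := by
      have := Finset.mem_of_mem_inter_left hz
      rwa [SimpleGraph.mem_neighborFinset] at this
    have hlt := hidx1 z (Finset.mem_of_mem_inter_right hz)
    have e1 := hgetz z (Finset.mem_of_mem_inter_right hz)
    have hne : List.idxOf z L ≠ t - 1 := by
      intro h0
      rw [h0, hw0] at e1
      exact hzw.ne (someinj e1)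
    rw [Finset.mem_erase, Finset.mem_range]
    exact ⟨by omega, by omega⟩
  have hST : Disjoint S T := by
    rw [Finset.disjoint_left]
    intro k hkS hkT
    rw [hS, Finset.mem_image] at hkS
    rw [hT, Finset.mem_image] at hkT
    obtain ⟨z1, hz1, hk1⟩ := hkS
    obtain ⟨z2, hz2, hk2⟩ := hkT
    have hlt1 := hidx1 z1 (Finset.mem_of_mem_inter_right hz1)
    have hlt2 := hidx1 z2 (Finset.mem_of_mem_inter_right hz2)
    have e1 := hgetz z1 (Finset.mem_of_mem_inter_right hz1)
    have e2 := hgetz z2 (Finset.mem_of_mem_inter_right hz2)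
    have hz1u : H.Adj u z1 := by
      have := Finset.mem_of_mem_inter_left hz1
      rwa [SimpleGraph.mem_neighborFinset] at this
    have hz2w : H.Adj w z2 := by
      have := Finset.mem_of_mem_inter_left hz2
      rwa [SimpleGraph.mem_neighborFinset] at this
    have heq' : List.idxOf z2 L + 1 = List.idxOf z1 L := by omega
    apply cross (List.idxOf z2 L) (by omega)
    · intro h
      have e2' : L[List.idxOf z2 L + 1]? = some z1 := by rw [heq']; exact e1
      have e3 := List.getElem?_eq_getElem (l := L) (i := List.idxOf z2 L + 1) h
      rw [e3] at e2'
      rw [someinj e2']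
      exact hz1u
    · intro h
      have e3 := List.getElem?_eq_getElem (l := L) (i := List.idxOf z2 L) h
      rw [e3] at e2
      rw [someinj e2]
      exact hz2w
  have honcard : S.card + T.card ≤ t - 1 := by
    have hsub := Finset.union_subset hSsub hTsub
    have hcards := Finset.card_le_card hsub
    rw [Finset.card_union_of_disjoint hST] at hcards
    have herase : ((Finset.range t).erase 0).card = t - 1 := by
      rw [Finset.card_erase_of_mem (by rw [Finset.mem_range]; omega), Finset.card_range]
    omega
  have hoffdisj : Disjoint (H.neighborFinset u \ Lf) (H.neighborFinset w \ Lf) := by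
    rw [Finset.disjoint_left]
    intro z hz1 hz2
    rw [Finset.mem_sdiff, SimpleGraph.mem_neighborFinset] at hz1 hz2
    exact common z (fun h => hz1.2 (List.mem_toFinset.mpr h)) hz1.1 hz2.1
  have hoffcard : (H.neighborFinset u \ Lf).card + (H.neighborFinset w \ Lf).card
      ≤ Fintype.card V - t := by
    have hsub : (H.neighborFinset u \ Lf) ∪ (H.neighborFinset w \ Lf) ⊆ Finset.univ \ Lf := by
      intro z hz
      rw [Finset.mem_union] at hz
      rw [Finset.mem_sdiff]
      rcases hz with hz | hz <;> exact ⟨Finset.mem_univ _, (Finset.mem_sdiff.mp hz).2⟩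
    have h1 := Finset.card_le_card hsub
    rw [Finset.card_union_of_disjoint hoffdisj] at h1
    rwa [Finset.card_sdiff_of_subset (Finset.subset_univ _), hLfcard, Finset.card_univ] at h1
  have hdu : H.degree u = (H.neighborFinset u ∩ Lf).card + (H.neighborFinset u \ Lf).card := by
    rw [Finset.card_inter_add_card_sdiff]; rfl
  have hdw : H.degree w = (H.neighborFinset w ∩ Lf).card + (H.neighborFinset w \ Lf).card := by
    rw [Finset.card_inter_add_card_sdiff]; rfl
  have htn : t ≤ Fintype.card V := by
    rw [← hLfcard, ← Finset.card_univ]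
    exact Finset.card_le_card (Finset.subset_univ _)
  omega

end X
open SimpleGraph







section Seg
variable {V : Type*} {G : SimpleGraph V} {m : ℕ} {f : ZMod m → V}

/-- cast of a natural below `m` into `ZMod m`, injectively -/
lemma cast_inj_lt (hm : 0 < m) {a b : ℕ} (ha : a < m) (hb : b < m)
    (h : (a : ZMod m) = (b : ZMod m)) : a = b := by
  haveI : NeZero m := ⟨by omega⟩
  have := congrArg ZMod.val h
  rwa [ZMod.val_cast_of_lt ha, ZMod.val_cast_of_lt hb] at this

lemma chain'_seg (hadj : ∀ k : ZMod m, G.Adj (f k) (f (k + 1))) (s n : ℕ) :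
    ((List.range' s n).map (fun t : ℕ => f (t : ZMod m))).Chain' G.Adj := by
  unfold List.Chain'
  rw [List.isChain_iff_getElem]
  intro i h
  simp only [List.length_map, List.length_range'] at h
  simp only [List.get_eq_getElem, List.getElem_map, List.getElem_range']
  have : ((s + 1 * (i+1) : ℕ) : ZMod m) = ((s + 1 * i : ℕ) : ZMod m) + 1 := by
    push_cast; ring
  rw [this]
  exact hadj _

lemma nodup_seg (hm : 0 < m) (hf : Function.Injective f) (s n : ℕ) (hn : s + n ≤ m) :
    ((List.range' s n).map (fun t : ℕ => f (t : ZMod m))).Nodup := by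
  apply List.Nodup.map_on _ (List.nodup_range' 1 (by norm_num))
  intro x hx y hy hxy
  rw [List.mem_range'_1] at hx hy
  exact cast_inj_lt hm (by omega) (by omega) (hf hxy)

lemma mem_seg {x : V} {s n : ℕ} :
    x ∈ (List.range' s n).map (fun t : ℕ => f (t : ZMod m)) ↔
      ∃ t : ℕ, s ≤ t ∧ t < s + n ∧ x = f (t : ZMod m) := by
  simp only [List.mem_map, List.mem_range'_1]
  constructor
  · rintro ⟨t, ⟨h1, h2⟩, rfl⟩; exact ⟨t, h1, h2, rfl⟩
  · rintro ⟨t, h1, h2, rfl⟩; exact ⟨t, ⟨h1, h2⟩, rfl⟩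

lemma seg_head {s n : ℕ} (hn : 0 < n) :
    (((List.range' s n).map (fun t : ℕ => f (t : ZMod m)))).head? = some (f (s : ZMod m)) := by
  obtain ⟨n', rfl⟩ : ∃ n', n = n' + 1 := ⟨n - 1, by omega⟩
  rw [List.range'_succ]
  rfl

lemma seg_last {s n : ℕ} (hn : 0 < n) :
    (((List.range' s n).map (fun t : ℕ => f (t : ZMod m)))).getLast?
      = some (f ((s + n - 1 : ℕ) : ZMod m)) := by
  rw [List.getLast?_eq_getElem?]
  simp only [List.length_map, List.length_range']
  rw [List.getElem?_map, List.getElem?_range' (by omega)]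
  simp only [Option.map_some]
  rw [show s + 1 * (n - 1) = s + n - 1 by omega]

lemma seg_length {s n : ℕ} :
    (((List.range' s n).map (fun t : ℕ => f (t : ZMod m)))).length = n := by
  simp

/-- extraction of an interior path inside `R` -/
lemma interior_path (hR : IsComponentOutside G m f R) {x y : V} (hx : x ∈ R) (hy : y ∈ R) :
    ∃ I : List V, I ≠ [] ∧ I.Nodup ∧ I.Chain' G.Adj ∧ (∀ z ∈ I, z ∈ R) ∧
      I.head? = some x ∧ I.getLast? = some y := by
  classical
  obtain ⟨-, -, hconn, -⟩ := hR
  have hreach : (G.induce R).Reachable ⟨x, hx⟩ ⟨y, hy⟩ := hconn ⟨x, hx⟩ ⟨y, hy⟩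
  obtain ⟨p0⟩ := hreach
  let p1 := p0.toPath
  let emb := SimpleGraph.Embedding.induce (G := G) R
  let q := SimpleGraph.Walk.map emb.toHom p1.1
  have hq : q.IsPath := SimpleGraph.Walk.map_isPath_of_injective emb.injective p1.2
  refine ⟨q.support, q.support_ne_nil, ?_, q.isChain_adj_support, ?_, ?_, ?_⟩
  · rw [← SimpleGraph.Walk.isPath_def]; exact hq
  · intro z hz
    rw [SimpleGraph.Walk.support_map, List.mem_map] at hz
    obtain ⟨⟨z', hz'⟩, -, rfl⟩ := hz
    exact hz'
  · rw [q.support_eq_cons]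
    rfl
  · rw [List.getLast?_eq_getLast q.support_ne_nil, q.getLast_support]
    rfl

end Seg

section NonConsec
variable {V : Type*}

lemma castm1 {m : ℕ} (hm : 1 ≤ m) : ((m - 1 : ℕ) : ZMod m) = -1 := by
  rw [Nat.cast_sub hm, ZMod.natCast_self, Nat.cast_one]
  ring

lemma nonconsec (G : SimpleGraph V) (m : ℕ) (f : ZMod m → V) (hC : IsLongestCycle G m f)
    (R : Set V) (hR : IsComponentOutside G m f R) (i j : ZMod m)
    (hi : ∃ x ∈ R, G.Adj (f i) x) (hj : ∃ x ∈ R, G.Adj (f j) x) : j ≠ i + 1 := by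
  obtain ⟨⟨hm3, finj, hadj⟩, hlong⟩ := hC
  haveI : NeZero m := ⟨by omega⟩
  intro hji
  obtain ⟨x, hxR, hix⟩ := hi
  obtain ⟨y, hyR, hjy⟩ := hj
  obtain ⟨I, hIne, hInd, hIch, hIR, hIh, hIl⟩ := interior_path hR hxR hyR
  set g : ZMod m → V := fun k => f (j + k) with hg
  have hgadj : ∀ k : ZMod m, G.Adj (g k) (g (k + 1)) := by
    intro k
    have := hadj (j + k)
    simpa [hg, add_assoc] using this
  have hginj : Function.Injective g := fun a b hab => by
    have := finj hab
    exact add_left_cancel this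
  set seg : List V := (List.range' 0 m).map (fun t : ℕ => g (t : ZMod m)) with hseg
  have hsegch : seg.Chain' G.Adj := chain'_seg hgadj 0 m
  have hsegnd : seg.Nodup := nodup_seg (by omega) hginj 0 m (by omega)
  have hseglast : seg.getLast? = some (g ((0 + m - 1 : ℕ) : ZMod m)) := seg_last (by omega)
  have hseghead : seg.head? = some (g ((0 : ℕ) : ZMod m)) := seg_head (by omega)
  have hglast : g ((0 + m - 1 : ℕ) : ZMod m) = f i := by
    have : ((0 + m - 1 : ℕ) : ZMod m) = -1 := by rw [Nat.zero_add]; exact castm1 (by omega)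
    rw [this, hg]
    congr 1
    rw [hji]; ring
  have hghead : g ((0 : ℕ) : ZMod m) = f j := by rw [hg]; simp
  set Lc : List V := seg ++ I with hLc
  have hch : Lc.Chain' G.Adj := by
    unfold List.Chain'
    rw [hLc, List.isChain_append]
    refine ⟨hsegch, hIch, ?_⟩
    intro a ha b hb
    rw [hseglast, hglast] at ha
    rw [hIh] at hb
    obtain rfl : f i = a := by simpa using ha
    obtain rfl : x = b := by simpa using hb
    exact hix
  have hnd : Lc.Nodup := by
    rw [hLc, List.nodup_append]
    refine ⟨hsegnd, hInd, ?_⟩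
    rintro a ha _ hb rfl
    rw [hseg] at ha
    rw [mem_seg] at ha
    obtain ⟨t, -, -, rfl⟩ := ha
    exact hR.2.1 _ (hIR _ hb) ⟨_, rfl⟩
  have hlen : Lc.length = m + I.length := by
    rw [hLc, List.length_append, hseg, seg_length]
  have hIlen : 1 ≤ I.length := by
    cases I with
    | nil => exact absurd rfl hIne
    | cons a t => simp
  have hhead : Lc.head? = some (f j) := by
    rw [hLc, head?_append' _ _ (by
      rw [hseg]; apply List.ne_nil_of_length_pos; rw [seg_length]; omega), hseghead, hghead]
  have hlast : Lc.getLast? = some y := by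
    rw [hLc, List.getLast?_append_of_ne_nil _ hIne, hIl]
  obtain ⟨v, c, hcyc, hclen⟩ := cycle_from_list Lc (by omega) hnd hch (f j) y hhead hlast hjy.symm
  have := hlong v c hcyc
  omega

end NonConsec

section Core
variable {V : Type*}

lemma core [Fintype V] [DecidableEq V] (G : SimpleGraph V) [instG : DecidableRel G.Adj]
    (m : ℕ) (f : ZMod m → V) (hC : IsLongestCycle G m f)
    (R : Set V) (hR : IsComponentOutside G m f R)
    (i : ZMod m) (hi0 : i ≠ 0)
    (hi : ∃ x ∈ R, G.Adj (f i) x) (hj : ∃ x ∈ R, G.Adj (f 0) x)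
    (hOre : OreEdge G (f (i - 1)) (f (i + 1))) :
    ¬OreEdge G (f i) (f (-1 : ZMod m)) := by
  intro hE2
  have hne1 : i ≠ 1 := by
    have := nonconsec G m f hC R hR 0 i hj hi
    simpa using this
  have hnem1 : i ≠ -1 := by
    intro h
    have := nonconsec G m f hC R hR i 0 hi hj
    apply this
    rw [h]; ring
  obtain ⟨⟨hm3, finj, hadj⟩, hlong⟩ := hC
  haveI : NeZero m := ⟨by omega⟩
  obtain ⟨x, hxR, hix⟩ := hi
  obtain ⟨y, hyR, h0y⟩ := hj
  obtain ⟨I, hIne, hInd, hIch, hIR, hIh, hIl⟩ := interior_path hR hxR hyR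
  have hIlen : 1 ≤ I.length := by
    cases I with
    | nil => exact absurd rfl hIne
    | cons a t => simp
  -- position of i
  set d := i.val with hd
  have hdlt : d < m := ZMod.val_lt i
  have hicast : (d : ZMod m) = i := ZMod.natCast_rightInverse i
  have hd0 : d ≠ 0 := by
    intro h; apply hi0; rw [← hicast, h, Nat.cast_zero]
  have hd1 : d ≠ 1 := by
    intro h; apply hne1; rw [← hicast, h, Nat.cast_one]
  have hdm1 : d ≠ m - 1 := by
    intro h; apply hnem1; rw [← hicast, h]; exact castm1 (by omega)
  have hd2 : 2 ≤ d := by omega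
  have hdm2 : d ≤ m - 2 := by omega
  -- cast equalities
  have e_dm1 : ((d - 1 : ℕ) : ZMod m) = i - 1 := by
    rw [Nat.cast_sub (by omega), hicast, Nat.cast_one]
  have e_dp1 : ((d + 1 : ℕ) : ZMod m) = i + 1 := by
    rw [Nat.cast_add, hicast, Nat.cast_one]
  have e_m1 : ((m - 1 : ℕ) : ZMod m) = -1 := castm1 (by omega)
  have hfine : f i ≠ f (-1 : ZMod m) := fun h => hnem1 (finj h)
  -- the two chunks of the cycle
  set chunk2 : List V := (List.range' 0 d).map (fun t : ℕ => f (t : ZMod m)) with hchunk2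
  set chunk3 : List V := (List.range' (d + 1) (m - 1 - d)).map (fun t : ℕ => f (t : ZMod m))
    with hchunk3
  have hch2 : chunk2.Chain' G.Adj := chain'_seg hadj 0 d
  have hch3 : chunk3.Chain' G.Adj := chain'_seg hadj (d + 1) (m - 1 - d)
  have hnd2 : chunk2.Nodup := nodup_seg (by omega) finj 0 d (by omega)
  have hnd3 : chunk3.Nodup := nodup_seg (by omega) finj (d + 1) (m - 1 - d) (by omega)
  have hlen2 : chunk2.length = d := seg_length
  have hlen3 : chunk3.length = m - 1 - d := seg_length
  have h2ne : chunk2 ≠ [] := by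
    apply List.ne_nil_of_length_pos; omega
  have h3ne : chunk3 ≠ [] := by
    apply List.ne_nil_of_length_pos; omega
  have hhead2 : chunk2.head? = some (f 0) := by
    rw [hchunk2, seg_head (by omega)]; norm_num
  have hlast2 : chunk2.getLast? = some (f (i - 1)) := by
    rw [hchunk2, seg_last (by omega), show (0 + d - 1 : ℕ) = d - 1 by omega, e_dm1]
  have hhead3 : chunk3.head? = some (f (i + 1)) := by
    rw [hchunk3, seg_head (by omega), e_dp1]
  have hlast3 : chunk3.getLast? = some (f (-1 : ZMod m)) := by
    rw [hchunk3, seg_last (by omega),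
      show (d + 1 + (m - 1 - d) - 1 : ℕ) = m - 1 by omega, e_m1]
  -- membership helpers
  have hmem2 : ∀ z ∈ chunk2, ∃ t : ℕ, t < d ∧ z = f (t : ZMod m) := by
    intro z hz
    rw [hchunk2, mem_seg] at hz
    obtain ⟨t, -, h2, rfl⟩ := hz
    exact ⟨t, by omega, rfl⟩
  have hmem3 : ∀ z ∈ chunk3, ∃ t : ℕ, d + 1 ≤ t ∧ t < m ∧ z = f (t : ZMod m) := by
    intro z hz
    rw [hchunk3, mem_seg] at hz
    obtain ⟨t, h1, h2, rfl⟩ := hz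
    exact ⟨t, h1, by omega, rfl⟩
  have hfcinj : ∀ a b : ℕ, a < m → b < m → f (a : ZMod m) = f (b : ZMod m) → a = b := by
    intro a b ha hb h
    exact cast_inj_lt (by omega) ha hb (finj h)
  have hdisj23 : chunk2.Disjoint chunk3 := by
    intro z hz2 hz3
    obtain ⟨t1, ht1, rfl⟩ := hmem2 z hz2
    obtain ⟨t2, ht2a, ht2b, heq⟩ := hmem3 _ hz3
    have := hfcinj t1 t2 (by omega) (by omega) heq
    omega
  have hfi2 : f i ∉ chunk2 := by
    intro h
    obtain ⟨t, ht, heq⟩ := hmem2 _ h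
    have hdd : f (d : ZMod m) = f (t : ZMod m) := by rw [hicast]; exact heq
    have := hfcinj d t (by omega) (by omega) hdd
    omega
  have hfi3 : f i ∉ chunk3 := by
    intro h
    obtain ⟨t, ht1, ht2, heq⟩ := hmem3 _ h
    have hdd : f (d : ZMod m) = f (t : ZMod m) := by rw [hicast]; exact heq
    have := hfcinj d t (by omega) (by omega) hdd
    omega
  have hIoff : ∀ z ∈ I, z ∉ Set.range f := by
    intro z hz
    exact hR.2.1 _ (hIR _ hz)
  have hI2 : I.Disjoint chunk2 := by
    intro z hz h2
    obtain ⟨t, -, rfl⟩ := hmem2 _ h2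
    exact hIoff _ hz ⟨_, rfl⟩
  have hI3 : I.Disjoint chunk3 := by
    intro z hz h3
    obtain ⟨t, -, -, rfl⟩ := hmem3 _ h3
    exact hIoff _ hz ⟨_, rfl⟩
  have hfiI : f i ∉ I := fun h => hIoff _ h ⟨_, rfl⟩
  by_cases hA : G.Adj (f (i - 1)) (f (i + 1))
  · -- Case A : the bypass edge is a real edge
    set LA : List V := (f i :: I) ++ (chunk2 ++ chunk3) with hLA
    have hch : LA.Chain' G.Adj := by
      unfold List.Chain'
      rw [hLA, List.isChain_append]
      refine ⟨?_, ?_, ?_⟩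
      · rw [List.isChain_cons]
        refine ⟨?_, hIch⟩
        intro b hb
        rw [hIh] at hb
        obtain rfl : x = b := by simpa using hb
        exact hix
      · rw [List.isChain_append]
        refine ⟨hch2, hch3, ?_⟩
        intro a ha b hb
        rw [hlast2] at ha
        rw [hhead3] at hb
        obtain rfl : f (i - 1) = a := by simpa using ha
        obtain rfl : f (i + 1) = b := by simpa using hb
        exact hA
      · intro a ha b hb
        rw [show (f i :: I) = [f i] ++ I from rfl,
          List.getLast?_append_of_ne_nil _ hIne, hIl] at ha
        rw [head?_append' _ _ h2ne, hhead2] at hb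
        obtain rfl : y = a := by simpa using ha
        obtain rfl : f 0 = b := by simpa using hb
        exact h0y.symm
    have hnd : LA.Nodup := by
      rw [hLA, List.nodup_append]
      refine ⟨?_, ?_, ?_⟩
      · rw [List.nodup_cons]
        exact ⟨hfiI, hInd⟩
      · rw [List.nodup_append]
        exact ⟨hnd2, hnd3, List.disjoint_iff_ne.mp hdisj23⟩
      · rintro a ha _ hb rfl
        rw [List.mem_append] at hb
        rcases List.mem_cons.mp ha with rfl | ha'
        · rcases hb with hb | hb
          · exact hfi2 hb
          · exact hfi3 hb
        · rcases hb with hb | hb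
          · exact hI2 ha' hb
          · exact hI3 ha' hb
    have hlen : m + 1 ≤ LA.length := by
      rw [hLA]
      simp only [List.length_append, List.length_cons]
      omega
    have hhead : LA.head? = some (f i) := rfl
    have hlast : LA.getLast? = some (f (-1 : ZMod m)) := by
      rw [hLA, List.getLast?_append_of_ne_nil _ (by
        intro h
        rcases List.append_eq_nil_iff.mp h with ⟨h1, -⟩
        exact h2ne h1), List.getLast?_append_of_ne_nil _ h3ne, hlast3]
    exact lemmaX G m hm3 hlong LA hnd hch hlen hhead hlast hE2
  · -- Case B : the bypass pair is a degree-sum pair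
    have hdegB : Fintype.card V ≤ G.degree (f (i - 1)) + G.degree (f (i + 1)) :=
      hOre.2.resolve_left hA
    -- common construction for a supergraph H containing the edge (f i, f (-1))
    have lemB : ∀ (H : SimpleGraph V) (instH : DecidableRel H.Adj), G ≤ H →
        H.Adj (f i) (f (-1 : ZMod m)) →
        Fintype.card V ≤ H.degree (f (i - 1)) + H.degree (f (i + 1)) →
        (∀ (v : V) (c : H.Walk v v), c.IsCycle → c.length ≤ m) → False := by
      intro H instH hGH hBadj hdegH hlongH
      set LB : List V := chunk2.reverse ++ (I.reverse ++ (f i :: chunk3.reverse)) with hLB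
      have hliftch : ∀ l : List V, l.Chain' G.Adj → l.Chain' H.Adj :=
        fun l hl => hl.imp (fun a b hab => hGH hab)
      have hch : LB.Chain' H.Adj := by
        unfold List.Chain'
        rw [hLB, List.isChain_append]
        refine ⟨?_, ?_, ?_⟩
        · rw [List.isChain_reverse]
          exact (hliftch _ hch2).imp (fun a b hab => hab.symm)
        · rw [List.isChain_append]
          refine ⟨?_, ?_, ?_⟩
          · rw [List.isChain_reverse]
            exact (hliftch _ hIch).imp (fun a b hab => hab.symm)
          · rw [List.isChain_cons]
            refine ⟨?_, ?_⟩
            · intro b hb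
              rw [List.head?_reverse, hlast3] at hb
              obtain rfl : f (-1 : ZMod m) = b := by simpa using hb
              exact hBadj
            · rw [List.isChain_reverse]
              exact (hliftch _ hch3).imp (fun a b hab => hab.symm)
          · intro a ha b hb
            rw [List.getLast?_reverse, hIh] at ha
            obtain rfl : x = a := by simpa using ha
            obtain rfl : f i = b := by simpa using hb
            exact hGH hix.symm
        · intro a ha b hb
          rw [List.getLast?_reverse, hhead2] at ha
          rw [head?_append' _ _ (by simpa using hIne), List.head?_reverse, hIl] at hb
          obtain rfl : f 0 = a := by simpa using ha
          obtain rfl : y = b := by simpa using hb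
          exact hGH h0y
      have hnd : LB.Nodup := by
        rw [hLB, List.nodup_append]
        refine ⟨List.nodup_reverse.mpr hnd2, ?_, ?_⟩
        · rw [List.nodup_append]
          refine ⟨List.nodup_reverse.mpr hInd, ?_, ?_⟩
          · rw [List.nodup_cons]
            exact ⟨by simpa using hfi3, List.nodup_reverse.mpr hnd3⟩
          · rintro a ha _ hb rfl
            rw [List.mem_reverse] at ha
            rcases List.mem_cons.mp hb with rfl | hb'
            · exact hfiI ha
            · exact hI3 ha (by simpa using hb')
        · rintro a ha _ hb rfl
          rw [List.mem_reverse] at ha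
          rw [List.mem_append] at hb
          rcases hb with hb | hb
          · rw [List.mem_reverse] at hb
            exact hI2 hb ha
          · rcases List.mem_cons.mp hb with rfl | hb'
            · exact hfi2 ha
            · exact hdisj23 ha (by simpa using hb')
      have hlen : m + 1 ≤ LB.length := by
        rw [hLB]
        simp only [List.length_append, List.length_cons, List.length_reverse]
        omega
      have hhead : LB.head? = some (f (i - 1)) := by
        rw [hLB, head?_append' _ _ (by simpa using h2ne), List.head?_reverse, hlast2]
      have hlast : LB.getLast? = some (f (i + 1)) := by
        rw [hLB, List.getLast?_append_of_ne_nil _ (by simp),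
          List.getLast?_append_of_ne_nil _ (by simp),
          show (f i :: chunk3.reverse) = [f i] ++ chunk3.reverse from rfl,
          List.getLast?_append_of_ne_nil _ (by simpa using h3ne),
          List.getLast?_reverse, hhead3]
      have horeH : OreEdge H (f (i - 1)) (f (i + 1)) := ⟨hOre.1, Or.inr hdegH⟩
      exact lemmaX H m hm3 hlongH LB hnd hch hlen hhead hlast horeH
    by_cases hB1 : G.Adj (f i) (f (-1 : ZMod m))
    · exact lemB G instG le_rfl hB1 hdegB hlong
    · -- Case B2 : both pairs are degree-sum pairs; add the edge (f i, f (-1))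
      have hdegE2 : Fintype.card V ≤ G.degree (f i) + G.degree (f (-1 : ZMod m)) :=
        hE2.2.resolve_left hB1
      set e : Sym2 V := s(f i, f (-1 : ZMod m)) with he
      set G2 : SimpleGraph V := SimpleGraph.fromEdgeSet (insert e G.edgeSet) with hG2
      haveI instH : DecidableRel G2.Adj := Classical.decRel _
      have hGH : G ≤ G2 := by
        intro a b hab
        rw [hG2, SimpleGraph.fromEdgeSet_adj]
        exact ⟨Set.mem_insert_of_mem _ hab, hab.ne⟩
      have hBadj : G2.Adj (f i) (f (-1 : ZMod m)) := by
        rw [hG2, SimpleGraph.fromEdgeSet_adj]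
        exact ⟨Set.mem_insert _ _, hfine⟩
      have hdegmono : ∀ v : V, G.degree v ≤ G2.degree v := by
        intro v
        apply Finset.card_le_card
        intro z hz
        rw [SimpleGraph.mem_neighborFinset] at hz ⊢
        exact hGH hz
      have hedge2 : ∀ e' ∈ G2.edgeSet, e' ≠ e → e' ∈ G.edgeSet := by
        intro e' he' hne
        rw [hG2, SimpleGraph.edgeSet_fromEdgeSet] at he'
        rcases he'.1 with h | h
        · exact absurd h hne
        · exact h
      have hlong2 : ∀ (v : V) (c : G2.Walk v v), c.IsCycle → c.length ≤ m := by
        intro v c hcyc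
        by_contra hlenc
        push_neg at hlenc
        by_cases hec : e ∈ c.edges
        · obtain ⟨p, hp, hpl, hpe⟩ := cycle_split c hcyc hec
          have hsub : ∀ e' ∈ p.edges, e' ∈ G.edgeSet := by
            intro e' he'
            refine hedge2 _ (p.edges_subset_edgeSet he') (fun h => hpe ?_)
            rw [h] at he'
            exact he'
          set p' := p.transfer G hsub with hp'
          have hp'path : p'.IsPath := hp.transfer hsub
          apply lemmaX G m hm3 hlong p'.support
            (by rw [← SimpleGraph.Walk.isPath_def]; exact hp'path)
            p'.isChain_adj_support
            (by rw [SimpleGraph.Walk.length_support, SimpleGraph.Walk.length_transfer]; omega)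
            (by rw [p'.support_eq_cons]; rfl)
            (by rw [List.getLast?_eq_getLast p'.support_ne_nil, p'.getLast_support])
            hE2
        · have hsub : ∀ e' ∈ c.edges, e' ∈ G.edgeSet := by
            intro e' he'
            refine hedge2 _ (c.edges_subset_edgeSet he') (fun h => hec ?_)
            rw [h] at he'
            exact he'
          have := hlong v (c.transfer G hsub) (hcyc.transfer hsub)
          rw [SimpleGraph.Walk.length_transfer] at this
          omega
      exact lemB G2 instH hGH hBadj
        (le_trans hdegB (Nat.add_le_add (hdegmono _) (hdegmono _))) hlong2

end Core

section Main
variable {V : Type*}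

lemma OreEdge_symm [Fintype V] {G : SimpleGraph V} [DecidableRel G.Adj] {x y : V}
    (h : OreEdge G x y) : OreEdge G y x :=
  ⟨h.1.symm, h.2.imp (fun a => a.symm) (fun a => by omega)⟩

lemma rot_longest {G : SimpleGraph V} {m : ℕ} {f : ZMod m → V} (hC : IsLongestCycle G m f)
    (c : ZMod m) : IsLongestCycle G m (fun k => f (c + k)) := by
  obtain ⟨⟨hm3, finj, hadj⟩, hlong⟩ := hC
  refine ⟨⟨hm3, ?_, ?_⟩, hlong⟩
  · intro a b hab
    exact add_left_cancel (finj hab)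
  · intro k
    have := hadj (c + k)
    simpa [add_assoc] using this

lemma rot_range {m : ℕ} {f : ZMod m → V} (c : ZMod m) :
    Set.range (fun k => f (c + k)) = Set.range f := by
  have hsurj : Function.Surjective (fun k : ZMod m => c + k) := fun x => ⟨x - c, by ring⟩
  exact hsurj.range_comp f

lemma rot_comp {G : SimpleGraph V} {m : ℕ} {f : ZMod m → V} {R : Set V}
    (hR : IsComponentOutside G m f R) (c : ZMod m) :
    IsComponentOutside G m (fun k => f (c + k)) R := by
  obtain ⟨h1, h2, h3, h4⟩ := hR
  refine ⟨h1, ?_, h3, ?_⟩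
  · rw [rot_range c]; exact h2
  · rw [rot_range c]; exact h4

lemma refl_longest {G : SimpleGraph V} {m : ℕ} {f : ZMod m → V} (hC : IsLongestCycle G m f)
    (c : ZMod m) : IsLongestCycle G m (fun k => f (c - k)) := by
  obtain ⟨⟨hm3, finj, hadj⟩, hlong⟩ := hC
  refine ⟨⟨hm3, ?_, ?_⟩, hlong⟩
  · intro a b hab
    have := finj hab
    have h2 := congrArg (fun z => c - z) this
    simpa using h2
  · intro k
    show G.Adj (f (c - k)) (f (c - (k + 1)))
    have h1 : c - (k + 1) + 1 = c - k := by ring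
    rw [← h1]
    exact (hadj (c - (k + 1))).symm

lemma refl_range {m : ℕ} {f : ZMod m → V} (c : ZMod m) :
    Set.range (fun k => f (c - k)) = Set.range f := by
  have hsurj : Function.Surjective (fun k : ZMod m => c - k) := fun x => ⟨c - x, by ring⟩
  exact hsurj.range_comp f

lemma refl_comp {G : SimpleGraph V} {m : ℕ} {f : ZMod m → V} {R : Set V}
    (hR : IsComponentOutside G m f R) (c : ZMod m) :
    IsComponentOutside G m (fun k => f (c - k)) R := by
  obtain ⟨h1, h2, h3, h4⟩ := hR
  refine ⟨h1, ?_, h3, ?_⟩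
  · rw [refl_range c]; exact h2
  · rw [refl_range c]; exact h4

theorem lemma3c' {V : Type*} [Fintype V] [DecidableEq V]
    (G : SimpleGraph V) [DecidableRel G.Adj]
    (m : ℕ) (f : ZMod m → V) (hC : IsLongestCycle G m f)
    (R : Set V) (hR : IsComponentOutside G m f R)
    (i j : ZMod m) (hij : i ≠ j)
    (hi : ∃ x ∈ R, G.Adj (f i) x) (hj : ∃ x ∈ R, G.Adj (f j) x)
    (hOre : OreEdge G (f (i - 1)) (f (i + 1))) :
    ¬OreEdge G (f i) (f (j - 1)) ∧ ¬OreEdge G (f i) (f (j + 1)) := by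
  constructor
  · have hC' := rot_longest hC j
    have hR' := rot_comp hR j
    have h1 : j + (i - j) = i := by ring
    have h2 : j + (i - j - 1) = i - 1 := by ring
    have h3 : j + (i - j + 1) = i + 1 := by ring
    have h4 : j + (-1 : ZMod m) = j - 1 := by ring
    have hcore := core G m (fun k => f (j + k)) hC' R hR' (i - j)
      (sub_ne_zero.mpr hij) ?_ ?_ ?_
    · simpa only [h1, h4] using hcore
    · simpa only [h1] using hi
    · simpa only [add_zero] using hj
    · simpa only [h2, h3] using hOre
  · have hC' := refl_longest hC j
    have hR' := refl_comp hR j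
    have h1 : j - (j - i) = i := by ring
    have h2 : j - (j - i - 1) = i + 1 := by ring
    have h3 : j - (j - i + 1) = i - 1 := by ring
    have h4 : j - (-1 : ZMod m) = j + 1 := by ring
    have hcore := core G m (fun k => f (j - k)) hC' R hR' (j - i)
      (sub_ne_zero.mpr (Ne.symm hij)) ?_ ?_ ?_
    · simpa only [h1, h4] using hcore
    · simpa only [h1] using hi
    · simpa only [sub_zero] using hj
    · simpa only [h2, h3] using (OreEdge_symm hOre)

end Main

/-- **Lemma 3(c) of the paper.** `G` non-Hamiltonian, `C` a longest cycle, `R` a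
component of `G - V(C)`, `f i`, `f j` distinct vertices of `C` having neighbors
in `R`. If `{(f i)⁻, (f i)⁺}` is an Ore-edge, then neither `{f i, (f j)⁻}` nor
`{f i, (f j)⁺}` is an Ore-edge. -/
theorem lemma3c {V : Type*} [Fintype V] [DecidableEq V]
    (G : SimpleGraph V) [DecidableRel G.Adj]
    (hnh : ¬G.IsHamiltonian)
    (m : ℕ) (f : ZMod m → V) (hC : IsLongestCycle G m f)
    (R : Set V) (hR : IsComponentOutside G m f R)
    (i j : ZMod m) (hij : i ≠ j)
    (hi : ∃ x ∈ R, G.Adj (f i) x) (hj : ∃ x ∈ R, G.Adj (f j) x)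
    (hOre : OreEdge G (f (i - 1)) (f (i + 1))) :
    ¬OreEdge G (f i) (f (j - 1)) ∧ ¬OreEdge G (f i) (f (j + 1)) :=
  lemma3c' G m f hC R hR i j hij hi hj hOre
end
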